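/- arXiv:2307.00288 — 4 statements merged into one kernel-verified Lean document; each statement's English description precedes it below -/
import Mathlib

section
/- Let p ≥ 2 and let (b_i)_{i≥0} be a solution of the semi-infinite lattice b_i' = b_i(Σ_{j=1}^p b_{i+j} − Σ_{j=1}^p b_{i−j}) on [0,T) with b_i(t) ≠ 0 (and b_l ≡ 0 for l < 0). Fix nonzero a_0(0), …, a_{p−2}(0) ∈ ℂ and define a_i(t) = a_i(0)·exp(∫_0^t b_{i+1}(τ)dτ) for 0 ≤ i ≤ p−2 and recursively a_i(t) = b_{i−p+1}(t)/(a_{i−p+1}(t)⋯a_{i−1}(t)) for i ≥ p−1. Let S_k^l(t) be the moments of L1(t) built from (a_i(t)) and S̃_k^l(t) the moments of L2(t) built from (b_i(t)). Then for all t ∈ [0,T) and k ≥ 0: S_k^1(t) = S̃_k^1(t), and for every 2 ≤ l ≤ p, S_k^l(t) = a_0(0)⋯a_{l−2}(0)·exp(∫_0^t (S̃_{l+p}^l(τ) − S̃_{p+1}^1(τ)) dτ)·S̃_k^l(t). -/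
open scoped BigOperators

noncomputable section

/-- The `j`-th standard basis sequence `e_j`. -/
def stdBasis (j : ℕ) : ℕ → ℂ := fun i => if i = j then 1 else 0

/-- Entries of the matrix `L1`: `(L1)_{i,i+p} = 1`, `(L1)_{i+1,i} = a_i`, other entries zero. -/
def L1entry (p : ℕ) (a : ℕ → ℂ) : ℕ → ℕ → ℂ :=
  fun i k => if k = i + p then 1 else if i = k + 1 then a k else 0

/-- Action of `L1` on a sequence. -/
def L1apply (p : ℕ) (a : ℕ → ℂ) (v : ℕ → ℂ) : ℕ → ℂ :=
  fun i => ∑ k ∈ Finset.range (i + p + 1), L1entry p a i k * v k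

/-- The moments of `L1`: `S_k^l = (L1^k e_0)_{l-1}`. -/
def momL1 (p : ℕ) (a : ℕ → ℂ) (k m : ℕ) : ℂ :=
  (L1apply p a)^[k] (stdBasis 0) (m - 1)

/-- Entries of the matrix `L2`: `(L2)_{i,i+1} = 1`, `(L2)_{i+p,i} = b_i`, other entries zero. -/
def L2entry (p : ℕ) (b : ℕ → ℂ) : ℕ → ℕ → ℂ :=
  fun i k => if k = i + 1 then 1 else if i = k + p then b k else 0

/-- Action of `L2` on a sequence. -/
def L2apply (p : ℕ) (b : ℕ → ℂ) (v : ℕ → ℂ) : ℕ → ℂ :=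
  fun i => ∑ k ∈ Finset.range (i + 2), L2entry p b i k * v k

/-- The moments of `L2`: `S̃_k^l = (L2^k e_{l-1})_0`. -/
def momL2 (p : ℕ) (b : ℕ → ℂ) (k n : ℕ) : ℂ :=
  (L2apply p b)^[k] (stdBasis (n - 1)) 0

lemma L1apply_eq (p : ℕ) (hp : 1 ≤ p) (a v : ℕ → ℂ) (m : ℕ) :
    L1apply p a v m = v (m + p) + (if 1 ≤ m then a (m - 1) * v (m - 1) else 0) := by
  unfold L1apply L1entry
  have h : ∀ k ∈ Finset.range (m + p + 1),
      (if k = m + p then (1:ℂ) else if m = k + 1 then a k else 0) * v k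
        = (if k = m + p then v k else 0)
          + (if 1 ≤ m then (if k = m - 1 then a k * v k else 0) else 0) := by
    intro k hk
    by_cases h1 : k = m + p
    · have h2 : ¬ m = k + 1 := by omega
      have h3 : ¬ (k = m - 1) := by omega
      by_cases hm : 1 ≤ m <;> simp [h1, h2, h3, hm] <;> omega
    · by_cases h2 : m = k + 1
      · subst h2
        have h3 : k + 1 - 1 = k := by omega
        simp [h1, h3]
      · have hne : ¬ (1 ≤ m) ∨ ¬ k = m - 1 := by omega
        by_cases hm : 1 ≤ m
        · have : ¬ k = m - 1 := by tauto
          simp [h1, h2, hm, this]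
        · simp [h1, h2, hm]
  rw [Finset.sum_congr rfl h, Finset.sum_add_distrib]
  congr 1
  · rw [Finset.sum_ite_eq' (Finset.range (m + p + 1)) (m + p) v]
    simp
  · by_cases hm : 1 ≤ m
    · simp only [hm, if_true]
      rw [Finset.sum_ite_eq' (Finset.range (m + p + 1)) (m - 1) (fun k => a k * v k)]
      have : m - 1 ∈ Finset.range (m + p + 1) := by simp; omega
      simp [this]
    · simp [hm]

lemma L2apply_eq (p : ℕ) (hp : 1 ≤ p) (b v : ℕ → ℂ) (i : ℕ) :
    L2apply p b v i = v (i + 1) + (if p ≤ i then b (i - p) * v (i - p) else 0) := by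
  unfold L2apply L2entry
  have h : ∀ k ∈ Finset.range (i + 2),
      (if k = i + 1 then (1:ℂ) else if i = k + p then b k else 0) * v k
        = (if k = i + 1 then v k else 0)
          + (if p ≤ i then (if k = i - p then b k * v k else 0) else 0) := by
    intro k hk
    by_cases h1 : k = i + 1
    · have h2 : ¬ i = k + p := by omega
      have h3 : ¬ (k = i - p) := by omega
      by_cases hm : p ≤ i <;> simp [h1, h2, h3, hm] <;> omega
    · by_cases h2 : i = k + p
      · have hm : p ≤ i := by omega
        have h3 : k = i - p := by omega
        have h4 : ¬ i = i + 1 := by omega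
        subst h3
        have h5 : i = i - p + p := by omega
        simp only [if_neg h1, if_pos h5, if_pos hm, if_pos rfl]
        simp
      · by_cases hm : p ≤ i
        · have : ¬ k = i - p := by omega
          simp [h1, h2, hm, this]
        · simp [h1, h2, hm]
  rw [Finset.sum_congr rfl h, Finset.sum_add_distrib]
  congr 1
  · rw [Finset.sum_ite_eq' (Finset.range (i + 2)) (i + 1) v]
    simp
  · by_cases hm : p ≤ i
    · simp only [hm, if_true]
      rw [Finset.sum_ite_eq' (Finset.range (i + 2)) (i - p) (fun k => b k * v k)]
      have : i - p ∈ Finset.range (i + 2) := by simp; omega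
      simp [this]
    · simp [hm]

def Ffun (p : ℕ) (b : ℕ → ℂ) (k m : ℕ) : ℂ := (L2apply p b)^[k] (stdBasis m) 0
def Gfun (p : ℕ) (a : ℕ → ℂ) (k m : ℕ) : ℂ := (L1apply p a)^[k] (stdBasis 0) m

lemma L2apply_iter_linear (p : ℕ) (b : ℕ → ℂ) (k : ℕ) (c d : ℂ) :
    ∀ u v : ℕ → ℂ, (L2apply p b)^[k] (fun i => c * u i + d * v i)
      = fun i => c * (L2apply p b)^[k] u i + d * (L2apply p b)^[k] v i := by
  induction k with
  | zero => intro u v; simp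
  | succ k ih =>
    intro u v
    rw [Function.iterate_succ_apply, Function.iterate_succ_apply, Function.iterate_succ_apply]
    have h : L2apply p b (fun i => c * u i + d * v i)
        = fun i => c * L2apply p b u i + d * L2apply p b v i := by
      funext j
      unfold L2apply
      rw [Finset.mul_sum, Finset.mul_sum, ← Finset.sum_add_distrib]
      exact Finset.sum_congr rfl (fun k _ => by ring)
    rw [h, ih]

lemma Ffun_zero (p : ℕ) (b : ℕ → ℂ) (m : ℕ) :
    Ffun p b 0 m = if m = 0 then 1 else 0 := by
  unfold Ffun stdBasis
  simp [eq_comm]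

lemma Ffun_succ (p : ℕ) (hp : 1 ≤ p) (b : ℕ → ℂ) (k m : ℕ) :
    Ffun p b (k + 1) m
      = (if 1 ≤ m then Ffun p b k (m - 1) else 0) + b m * Ffun p b k (m + p) := by
  unfold Ffun
  rw [Function.iterate_succ_apply]
  have h : L2apply p b (stdBasis m)
      = fun i => (if 1 ≤ m then (1:ℂ) else 0) * stdBasis (m - 1) i + b m * stdBasis (m + p) i := by
    funext i
    rw [L2apply_eq p hp]
    unfold stdBasis
    by_cases hm : 1 ≤ m
    · by_cases h1 : i + 1 = m
      · have h2 : i = m - 1 := by omega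
        have h3 : ¬ i = m + p := by omega
        have h4 : ¬ (p ≤ i ∧ i - p = m) := by omega
        by_cases hpi : p ≤ i
        · have : ¬ i - p = m := by omega
          simp [h1, h2, h3, hm, hpi, this]
          split_ifs <;> first | rfl | omega
        · simp [h1, h2, h3, hm, hpi]
          split_ifs <;> first | rfl | omega
      · have h2 : ¬ i = m - 1 := by omega
        by_cases h3 : i = m + p
        · have hpi : p ≤ i := by omega
          have h5 : i - p = m := by omega
          simp [h1, h2, h3, hm, hpi, h5]
          split_ifs <;> first | rfl | omega
        · by_cases hpi : p ≤ i
          · have : ¬ i - p = m := by omega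
            simp [h1, h2, h3, hm, hpi, this]
          · simp [h1, h2, h3, hm, hpi]
    · have hm0 : m = 0 := by omega
      subst hm0
      have h1 : ¬ i + 1 = 0 := by omega
      by_cases h3 : i = p
      · have hpi : p ≤ i := by omega
        have h5 : i - p = 0 := by omega
        simp [h1, h3, hpi, h5]
      · by_cases hpi : p ≤ i
        · have : ¬ i - p = 0 := by omega
          simp [h1, h3, hpi, this]
        · simp [h1, h3, hpi]
  rw [h, L2apply_iter_linear]
  by_cases hm : 1 ≤ m <;> simp [hm]

lemma Gfun_zero (p : ℕ) (a : ℕ → ℂ) (m : ℕ) :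
    Gfun p a 0 m = if m = 0 then 1 else 0 := by
  unfold Gfun stdBasis
  simp

lemma Gfun_succ (p : ℕ) (hp : 1 ≤ p) (a : ℕ → ℂ) (k m : ℕ) :
    Gfun p a (k + 1) m
      = Gfun p a k (m + p) + (if 1 ≤ m then a (m - 1) * Gfun p a k (m - 1) else 0) := by
  unfold Gfun
  rw [Function.iterate_succ_apply', L1apply_eq p hp]

lemma Ffun_of_lt (p : ℕ) (hp : 1 ≤ p) (b : ℕ → ℂ) :
    ∀ k m : ℕ, k < m → Ffun p b k m = 0 := by
  intro k
  induction k with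
  | zero => intro m hm; rw [Ffun_zero]; simp; omega
  | succ k ih =>
    intro m hm
    rw [Ffun_succ p hp]
    have h1 : (if 1 ≤ m then Ffun p b k (m - 1) else 0) = 0 := by
      by_cases h : 1 ≤ m
      · simp only [h, if_true]; exact ih _ (by omega)
      · simp [h]
    rw [h1, ih (m + p) (by omega)]
    ring

lemma Ffun_le (p : ℕ) (hp : 1 ≤ p) (b : ℕ → ℂ) :
    ∀ k, k ≤ p → ∀ m : ℕ, Ffun p b k m = if m = k then 1 else 0 := by
  intro k
  induction k with
  | zero => intro _ m; exact Ffun_zero p b m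
  | succ k ih =>
    intro hk m
    rw [Ffun_succ p hp, ih (by omega), Ffun_of_lt p hp b k (m + p) (by omega), mul_zero, add_zero]
    split_ifs <;> first | rfl | omega

lemma Ffun_diag (p : ℕ) (hp : 1 ≤ p) (b : ℕ → ℂ) :
    ∀ r : ℕ, Ffun p b (p + r) (p + r) = 1 := by
  intro r
  induction r with
  | zero => simp only [Nat.add_zero]; rw [Ffun_le p hp b p le_rfl]; simp
  | succ r ih =>
    have h : p + (r + 1) = (p + r) + 1 := by omega
    rw [h, Ffun_succ p hp, Ffun_of_lt p hp b (p + r) (p + r + 1 + p) (by omega)]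
    have h1 : (1:ℕ) ≤ p + r + 1 := by omega
    have h2 : p + r + 1 - 1 = p + r := by omega
    rw [if_pos h1, h2, ih]
    ring

lemma Ffun_main (p : ℕ) (hp : 1 ≤ p) (b : ℕ → ℂ) :
    ∀ r : ℕ, 1 ≤ r → Ffun p b (p + r) (r - 1) = ∑ i ∈ Finset.range r, b i := by
  intro r
  induction r with
  | zero => omega
  | succ r ih =>
    intro _
    by_cases hr : 1 ≤ r
    · have h : p + (r + 1) = (p + r) + 1 := by omega
      have h2 : r + 1 - 1 = r := by omega
      rw [h, h2, Ffun_succ p hp]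
      have h4 : r + p = p + r := by omega
      rw [if_pos hr, ih hr, h4, Ffun_diag p hp, Finset.sum_range_succ]
      ring
    · have h0 : r = 0 := by omega
      subst h0
      have h : p + 1 = p + 1 := rfl
      rw [Ffun_succ p hp]
      have h1 : ¬ (1:ℕ) ≤ 0 := by omega
      rw [if_neg h1, Ffun_le p hp b p le_rfl]
      simp

lemma GF_conj (p : ℕ) (hp : 1 ≤ p) (a b : ℕ → ℂ)
    (hb : ∀ m : ℕ, b m = ∏ j ∈ Finset.range p, a (m + j)) :
    ∀ k m : ℕ, Gfun p a k m = (∏ i ∈ Finset.range m, a i) * Ffun p b k m := by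
  intro k
  induction k with
  | zero =>
    intro m
    rw [Gfun_zero, Ffun_zero]
    by_cases h : m = 0 <;> simp [h]
  | succ k ih =>
    intro m
    rw [Gfun_succ p hp, Ffun_succ p hp, ih, ih]
    have hd : (∏ i ∈ Finset.range (m + p), a i)
        = (∏ i ∈ Finset.range m, a i) * b m := by
      rw [Finset.prod_range_add, hb m]
    rw [hd]
    by_cases hm : 1 ≤ m
    · rw [if_pos hm, if_pos hm]
      have hd2 : (∏ i ∈ Finset.range m, a i)
          = (∏ i ∈ Finset.range (m - 1), a i) * a (m - 1) := by
        conv_lhs => rw [show m = (m - 1) + 1 by omega]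
        rw [Finset.prod_range_succ]
      rw [hd2]
      ring
    · rw [if_neg hm, if_neg hm]
      ring

/-- Description of the inverse Miura transformation in terms of moments:
`S_k^1(t) = S̃_k^1(t)` and, for `2 ≤ l ≤ p`,
`S_k^l(t) = a_0(0) ⋯ a_{l−2}(0) · exp(∫_0^t (S̃_{l+p}^l − S̃_{p+1}^1)) · S̃_k^l(t)`. -/
theorem miura_moments_inverse (p : ℕ) (hp : 2 ≤ p) (T : ℝ) (hT : 0 < T)
    (b : ℤ → ℝ → ℂ)
    (hbneg : ∀ l : ℤ, l < 0 → ∀ t : ℝ, b l t = 0)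
    (hbne : ∀ i : ℤ, 0 ≤ i → ∀ t ∈ Set.Ico (0 : ℝ) T, b i t ≠ 0)
    (hbode : ∀ i : ℤ, 0 ≤ i → ∀ t ∈ Set.Ico (0 : ℝ) T, HasDerivWithinAt (b i)
      (b i t * (∑ j ∈ Finset.Icc 1 p, b (i + (j : ℤ)) t -
        ∑ j ∈ Finset.Icc 1 p, b (i - (j : ℤ)) t)) (Set.Ico (0 : ℝ) T) t)
    (α : ℤ → ℂ) (hα : ∀ i : ℤ, 0 ≤ i → i ≤ (p : ℤ) - 2 → α i ≠ 0)
    (a : ℤ → ℝ → ℂ)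
    (haneg : ∀ l : ℤ, l < 0 → ∀ t : ℝ, a l t = 0)
    (hadef1 : ∀ i : ℤ, 0 ≤ i → i ≤ (p : ℤ) - 2 → ∀ t ∈ Set.Ico (0 : ℝ) T,
      a i t = α i * Complex.exp (∫ τ in (0 : ℝ)..t, b (i + 1) τ))
    (hadef2 : ∀ i : ℤ, (p : ℤ) - 1 ≤ i → ∀ t ∈ Set.Ico (0 : ℝ) T,
      a i t = b (i - (p : ℤ) + 1) t /
        ∏ j ∈ Finset.range (p - 1), a (i - (p : ℤ) + 1 + (j : ℤ)) t) :
    ∀ t ∈ Set.Ico (0 : ℝ) T, ∀ k : ℕ,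
      momL1 p (fun n : ℕ => a (n : ℤ) t) k 1 = momL2 p (fun n : ℕ => b (n : ℤ) t) k 1 ∧
      (∀ l : ℕ, 2 ≤ l → l ≤ p →
        momL1 p (fun n : ℕ => a (n : ℤ) t) k l =
          (∏ i ∈ Finset.range (l - 1), α (i : ℤ)) *
            Complex.exp (∫ τ in (0 : ℝ)..t,
              (momL2 p (fun n : ℕ => b (n : ℤ) τ) (l + p) l -
                momL2 p (fun n : ℕ => b (n : ℤ) τ) (p + 1) 1)) *
            momL2 p (fun n : ℕ => b (n : ℤ) t) k l) := by
  intro t ht k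
  have hp1 : 1 ≤ p := by omega
  -- nonvanishing of a at time t
  have hAne : ∀ n : ℕ, a (n : ℤ) t ≠ 0 := by
    intro n
    induction n using Nat.strong_induction_on with
    | _ n ih =>
      by_cases hn : (n : ℤ) ≤ (p : ℤ) - 2
      · rw [hadef1 (n : ℤ) (by positivity) hn t ht]
        exact mul_ne_zero (hα (n : ℤ) (by positivity) hn) (Complex.exp_ne_zero _)
      · have hn' : (p : ℤ) - 1 ≤ (n : ℤ) := by omega
        rw [hadef2 (n : ℤ) hn' t ht]
        apply div_ne_zero
        · exact hbne _ (by omega) t ht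
        · rw [Finset.prod_ne_zero_iff]
          intro j hj
          have hj' : j < p - 1 := Finset.mem_range.mp hj
          have hcast : (n : ℤ) - (p : ℤ) + 1 + (j : ℤ) = ((n + 1 - p + j : ℕ) : ℤ) := by omega
          rw [hcast]
          exact ih _ (by omega)
  -- product formula for b at time t
  have hB : ∀ m : ℕ, b (m : ℤ) t = ∏ j ∈ Finset.range p, a ((m + j : ℕ) : ℤ) t := by
    intro m
    have key := hadef2 ((m : ℤ) + (p : ℤ) - 1) (by omega) t ht
    have hidx : (m : ℤ) + (p : ℤ) - 1 - (p : ℤ) + 1 = (m : ℤ) := by ring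
    rw [hidx] at key
    have hDne : (∏ j ∈ Finset.range (p - 1), a ((m : ℤ) + (j : ℤ)) t) ≠ 0 := by
      rw [Finset.prod_ne_zero_iff]
      intro j hj
      have hcast : (m : ℤ) + (j : ℤ) = ((m + j : ℕ) : ℤ) := by omega
      rw [hcast]; exact hAne _
    have hbm : b (m : ℤ) t
        = a ((m : ℤ) + (p : ℤ) - 1) t * ∏ j ∈ Finset.range (p - 1), a ((m : ℤ) + (j : ℤ)) t :=
      ((eq_div_iff hDne).mp key).symm
    have hsplit : (∏ j ∈ Finset.range p, a ((m + j : ℕ) : ℤ) t)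
        = (∏ j ∈ Finset.range (p - 1), a ((m : ℤ) + (j : ℤ)) t) * a ((m : ℤ) + (p : ℤ) - 1) t := by
      conv_lhs => rw [show p = (p - 1) + 1 by omega]
      rw [Finset.prod_range_succ]
      congr 1
      · rw [show ((m + (p - 1) : ℕ) : ℤ) = (m : ℤ) + (p : ℤ) - 1 by omega]
    rw [hbm, hsplit]; ring
  have hGF := GF_conj p hp1 (fun n : ℕ => a (n : ℤ) t) (fun n : ℕ => b (n : ℤ) t) hB
  constructor
  · have hm1 : momL1 p (fun n : ℕ => a (n : ℤ) t) k 1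
        = Gfun p (fun n : ℕ => a (n : ℤ) t) k 0 := rfl
    have hm2 : momL2 p (fun n : ℕ => b (n : ℤ) t) k 1
        = Ffun p (fun n : ℕ => b (n : ℤ) t) k 0 := rfl
    rw [hm1, hm2, hGF k 0]
    simp
  · intro l hl2 hlp
    have hInt : ∀ m : ℤ, 0 ≤ m → IntervalIntegrable (b m) MeasureTheory.volume 0 t := by
      intro m hm
      apply ContinuousOn.intervalIntegrable
      have hsub : Set.uIcc (0:ℝ) t ⊆ Set.Ico (0:ℝ) T := by
        rw [Set.uIcc_of_le ht.1]
        intro x hx; exact ⟨hx.1, lt_of_le_of_lt hx.2 ht.2⟩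
      intro τ hτ
      exact ((hbode m hm τ (hsub hτ)).continuousWithinAt).mono hsub
    have integrand : ∀ τ : ℝ,
        momL2 p (fun n : ℕ => b (n:ℤ) τ) (l + p) l - momL2 p (fun n : ℕ => b (n:ℤ) τ) (p + 1) 1
          = ∑ i ∈ Finset.range (l - 1), b ((i:ℤ) + 1) τ := by
      intro τ
      have e1 : momL2 p (fun n : ℕ => b (n:ℤ) τ) (l + p) l
          = Ffun p (fun n : ℕ => b (n:ℤ) τ) (l + p) (l - 1) := rfl
      have e2 : momL2 p (fun n : ℕ => b (n:ℤ) τ) (p + 1) 1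
          = Ffun p (fun n : ℕ => b (n:ℤ) τ) (p + 1) 0 := rfl
      rw [e1, e2, show l + p = p + l from by omega,
        Ffun_main p hp1 _ l (by omega)]
      have h4 : Ffun p (fun n : ℕ => b (n:ℤ) τ) (p + 1) 0 = b (0:ℤ) τ := by
        have h5 := Ffun_main p hp1 (fun n : ℕ => b (n:ℤ) τ) 1 le_rfl
        simpa using h5
      rw [h4]
      have h6 := Finset.sum_range_succ' (fun n : ℕ => b (n:ℤ) τ) (l - 1)
      rw [show l - 1 + 1 = l from by omega] at h6
      rw [h6]
      simp only [Nat.cast_zero]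
      rw [add_sub_cancel_right]
      exact Finset.sum_congr rfl fun i _ => by norm_cast
    have hstep : ∀ i ∈ Finset.range (l - 1),
        a (i:ℤ) t = α (i:ℤ) * Complex.exp (∫ τ in (0:ℝ)..t, b ((i:ℤ) + 1) τ) := by
      intro i hi
      have hi' : i < l - 1 := Finset.mem_range.mp hi
      exact hadef1 (i:ℤ) (by positivity) (by omega) t ht
    have hprod : (∏ i ∈ Finset.range (l - 1), a (i:ℤ) t)
        = (∏ i ∈ Finset.range (l - 1), α (i:ℤ)) *
          Complex.exp (∫ τ in (0:ℝ)..t, ∑ i ∈ Finset.range (l - 1), b ((i:ℤ) + 1) τ) := by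
      rw [Finset.prod_congr rfl hstep, Finset.prod_mul_distrib, ← Complex.exp_sum]
      congr 2
      exact (intervalIntegral.integral_finset_sum
        (fun (i : ℕ) _ => hInt ((i:ℤ) + 1) (by omega))).symm
    have hm1 : momL1 p (fun n : ℕ => a (n:ℤ) t) k l
        = Gfun p (fun n : ℕ => a (n:ℤ) t) k (l - 1) := rfl
    have hm2 : momL2 p (fun n : ℕ => b (n:ℤ) t) k l
        = Ffun p (fun n : ℕ => b (n:ℤ) t) k (l - 1) := rfl
    rw [hm1, hm2, hGF k (l - 1)]
    simp only [integrand]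
    rw [hprod]
end
end

section
/- Let p ≥ 1, N ≥ 2p−1, and let a_0,…,a_N : I → ℂ be differentiable nowhere-vanishing functions on an interval I solving the finite Bogoyavlensky lattice a_i' = a_i(∏_{j=1}^p a_{i+j} − ∏_{j=1}^p a_{i−j}) for i = 0,…,N (with a_l ≡ 0 for l < 0 and l > N). Let S_k^m(t) := (L1_N(t)^k)_{m−1,0}. Suppose C_0,…,C_{N+1} : I → ℂ are differentiable and satisfy S_k^l(t) = Σ_{v=0}^{N+1} C_v(t)·S_{k−v−1}^l(t) for all integers k ≥ N+2, all 1 ≤ l ≤ p, and all t ∈ I, and suppose Δ_{N+1}(t) ≠ 0 for all t ∈ I, where Δ_{N+1}(t) = det(α_{ij}(t))_{i,j=0}^{N+1} with α_{ij} = S_{⌊i/p⌋+j}^{(i mod p)+1}. Then each C_v is constant on I (i.e., C_0,…,C_{N+1} are first integrals of the lattice). -/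
open scoped BigOperators

noncomputable section

/-- The `(N+2)×(N+2)` matrix `L1_N`: `(L1_N)_{i,i+p} = 1`, `(L1_N)_{i+1,i} = a_i`,
all other entries zero. -/
def L1N (p N : ℕ) (a : ℕ → ℂ) : Matrix (Fin (N + 2)) (Fin (N + 2)) ℂ :=
  Matrix.of fun i j => if (j : ℕ) = (i : ℕ) + p then 1
    else if (i : ℕ) = (j : ℕ) + 1 then a (j : ℕ) else 0

open Fin.NatCast in
/-- The moments of `L1_N`: `S_k^m = (L1_N^k)_{m−1,0}`. -/
def momL1N (p N : ℕ) (a : ℕ → ℂ) (k m : ℕ) : ℂ :=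
  (L1N p N a ^ k) ((m - 1 : ℕ) : Fin (N + 2)) ((0 : ℕ) : Fin (N + 2))

namespace FRCaux

open Fin.NatCast

def Bmat (p N : ℕ) (A : ℕ → ℂ) : Matrix (Fin (N + 2)) (Fin (N + 2)) ℂ :=
  Matrix.of fun i j => if (i : ℕ) = (j : ℕ) + (p + 1) then
    ∏ s ∈ Finset.range (p + 1), A ((j : ℕ) + s) else 0

lemma sum_ite_fin {n : ℕ} (c : ℕ) (X : Fin n → ℂ) :
    (∑ m : Fin n, if (m : ℕ) = c then X m else 0) = if h : c < n then X ⟨c, h⟩ else 0 := by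
  split_ifs with h
  · rw [Finset.sum_eq_single (⟨c, h⟩ : Fin n)]
    · simp
    · intro m _ hm
      rw [if_neg]
      exact fun hc => hm (Fin.ext hc)
    · simp
  · apply Finset.sum_eq_zero
    intro m _
    rw [if_neg]
    exact fun hc => h (hc ▸ m.isLt)

lemma sum_ite_fin' {n : ℕ} (c d : ℕ) (X : Fin n → ℂ) :
    (∑ m : Fin n, if c = (m : ℕ) + d then X m else 0) =
      if h : d ≤ c ∧ c - d < n then X ⟨c - d, h.2⟩ else 0 := by
  have : ∀ m : Fin n, (if c = (m : ℕ) + d then X m else 0)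
      = if (m : ℕ) = c - d ∧ d ≤ c then X m else 0 := by
    intro m; congr 1; simp only [eq_iff_iff]; omega
  rw [Finset.sum_congr rfl fun m _ => this m]
  by_cases hd : d ≤ c
  · simp only [hd, and_true, true_and]
    rw [sum_ite_fin]
  · simp only [hd, and_false, if_false, Finset.sum_const_zero]
    rw [dif_neg (fun h => h.1.elim)]

lemma prod_shift (A : ℕ → ℂ) (j p : ℕ) :
    A (j + (p + 1)) * ∏ s ∈ Finset.range (p + 1), A (j + s)
      = (∏ s ∈ Finset.range (p + 1), A (j + 1 + s)) * A j := by
  rw [mul_comm, ← Finset.prod_range_succ fun s => A (j + s),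
    Finset.prod_range_succ' fun s => A (j + s)]
  simp only [add_zero]
  congr 1
  refine Finset.prod_congr rfl fun s _ => ?_
  congr 1
  omega

lemma val_mk' {n x : ℕ} (h : x < n) : ((⟨x, h⟩ : Fin n) : ℕ) = x := rfl

lemma L1N_apply (p N : ℕ) (A : ℕ → ℂ) (i j : Fin (N + 2)) :
    L1N p N A i j = if (j : ℕ) = (i : ℕ) + p then 1
      else if (i : ℕ) = (j : ℕ) + 1 then A (j : ℕ) else 0 := rfl

lemma Bmat_apply (p N : ℕ) (A : ℕ → ℂ) (i j : Fin (N + 2)) :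
    Bmat p N A i j = if (i : ℕ) = (j : ℕ) + (p + 1) then
      ∏ s ∈ Finset.range (p + 1), A ((j : ℕ) + s) else 0 := rfl

lemma L1N_mkrow (p N x : ℕ) (A : ℕ → ℂ) (hx : x < N + 2) (j : Fin (N + 2)) :
    L1N p N A ⟨x, hx⟩ j = if (j : ℕ) = x + p then 1
      else if x = (j : ℕ) + 1 then A (j : ℕ) else 0 := rfl

lemma L1N_mkcol (p N y : ℕ) (A : ℕ → ℂ) (hy : y < N + 2) (i : Fin (N + 2)) :
    L1N p N A i ⟨y, hy⟩ = if y = (i : ℕ) + p then 1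
      else if (i : ℕ) = y + 1 then A y else 0 := rfl

lemma comm_apply (p N : ℕ) (A : ℕ → ℂ) (hA : ∀ n, N < n → A n = 0) (i j : Fin (N + 2)) :
    (L1N p N A * Bmat p N A - Bmat p N A * L1N p N A) i j =
      if (i : ℕ) = (j : ℕ) + 1 then
        (∏ s ∈ Finset.range (p + 1), A ((j : ℕ) + s)) -
          (if p ≤ (j : ℕ) then ∏ s ∈ Finset.range (p + 1), A ((j : ℕ) - p + s) else 0)
      else 0 := by
  have hi := i.isLt
  have hj := j.isLt
  rw [Matrix.sub_apply, Matrix.mul_apply, Matrix.mul_apply]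
  have e1 : ∀ m : Fin (N+2), L1N p N A i m * Bmat p N A m j
      = if (m:ℕ) = (j:ℕ) + (p+1) then
          L1N p N A i m * ∏ s ∈ Finset.range (p+1), A ((j:ℕ) + s) else 0 := by
    intro m; rw [Bmat_apply, mul_ite, mul_zero]
  have e2 : ∀ m : Fin (N+2), Bmat p N A i m * L1N p N A m j
      = if (i:ℕ) = (m:ℕ) + (p+1) then
          (∏ s ∈ Finset.range (p+1), A ((m:ℕ) + s)) * L1N p N A m j else 0 := by
    intro m; rw [Bmat_apply, ite_mul, zero_mul]
  rw [Finset.sum_congr rfl fun m _ => e1 m, Finset.sum_congr rfl fun m _ => e2 m,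
    sum_ite_fin, sum_ite_fin']
  simp only [val_mk']
  by_cases c1 : (i:ℕ) = (j:ℕ) + 1
  · rw [if_pos c1]
    have hLB : (if h : (j:ℕ) + (p+1) < N + 2 then
          L1N p N A i ⟨(j:ℕ)+(p+1), h⟩ * ∏ s ∈ Finset.range (p+1), A ((j:ℕ) + s) else 0)
        = ∏ s ∈ Finset.range (p+1), A ((j:ℕ) + s) := by
      by_cases hb : (j:ℕ) + (p+1) < N + 2
      · rw [dif_pos hb, L1N_mkcol, if_pos (by omega), one_mul]
      · rw [dif_neg hb]
        refine (Finset.prod_eq_zero (Finset.self_mem_range_succ p) ?_).symm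
        exact hA _ (by omega)
    rw [hLB]
    congr 1
    by_cases c2 : p ≤ (j:ℕ)
    · have hg : (p+1) ≤ (i:ℕ) ∧ (i:ℕ)-(p+1) < N+2 := by omega
      rw [if_pos c2, dif_pos hg, L1N_mkrow, if_pos (by omega), mul_one]
      refine Finset.prod_congr rfl fun s _ => ?_
      congr 1
      omega
    · rw [if_neg c2, dif_neg (by omega)]
  · rw [if_neg c1]
    by_cases c3 : (i:ℕ) = (j:ℕ) + p + 2
    · have hb1 : (j:ℕ)+(p+1) < N+2 := by omega
      have hb2 : (p+1) ≤ (i:ℕ) ∧ (i:ℕ)-(p+1) < N+2 := by omega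
      rw [dif_pos hb1, dif_pos hb2, L1N_mkcol, if_neg (by omega), if_pos (by omega),
        L1N_mkrow, if_neg (by omega), if_pos (by omega)]
      have f3 : (∏ s ∈ Finset.range (p+1), A ((i:ℕ)-(p+1) + s))
          = ∏ s ∈ Finset.range (p+1), A ((j:ℕ) + 1 + s) := by
        refine Finset.prod_congr rfl fun s _ => ?_
        congr 1
        omega
      rw [f3, prod_shift, sub_self]
    · have z1 : (if h : (j:ℕ) + (p+1) < N + 2 then
          L1N p N A i ⟨(j:ℕ)+(p+1), h⟩ * ∏ s ∈ Finset.range (p+1), A ((j:ℕ) + s) else 0) = 0 := by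
        by_cases hb : (j:ℕ) + (p+1) < N + 2
        · rw [dif_pos hb, L1N_mkcol, if_neg (by omega), if_neg (by omega), zero_mul]
        · rw [dif_neg hb]
      have z2 : (if h : (p+1) ≤ (i:ℕ) ∧ (i:ℕ) - (p+1) < N + 2 then
          (∏ s ∈ Finset.range (p+1), A ((i:ℕ)-(p+1) + s))
            * L1N p N A ⟨(i:ℕ)-(p+1), h.2⟩ j
          else 0) = 0 := by
        by_cases hb : (p+1) ≤ (i:ℕ) ∧ (i:ℕ) - (p+1) < N + 2
        · rw [dif_pos hb, L1N_mkrow, if_neg (by omega), if_neg (by omega), mul_zero]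
        · rw [dif_neg hb]
      rw [z1, z2, sub_self]

lemma Bmat_mkrow (p N x : ℕ) (A : ℕ → ℂ) (hx : x < N + 2) (j : Fin (N + 2)) :
    Bmat p N A ⟨x, hx⟩ j = if x = (j : ℕ) + (p + 1) then
      ∏ s ∈ Finset.range (p + 1), A ((j : ℕ) + s) else 0 := rfl

lemma Bmat_mkcol (p N y : ℕ) (A : ℕ → ℂ) (hy : y < N + 2) (i : Fin (N + 2)) :
    Bmat p N A i ⟨y, hy⟩ = if (i : ℕ) = y + (p + 1) then
      ∏ s ∈ Finset.range (p + 1), A (y + s) else 0 := rfl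

lemma zero_cast (N : ℕ) : ((0 : ℕ) : Fin (N + 2)) = ⟨0, by omega⟩ := by
  ext; simp

lemma pow_col0 (p N : ℕ) (A : ℕ → ℂ) (hpN : p ≤ N + 1) :
    ∀ r, r ≤ p → ∀ m : Fin (N + 2), (L1N p N A ^ r) m ((0 : ℕ) : Fin (N + 2)) =
      if (m : ℕ) = r then ∏ s ∈ Finset.range r, A s else 0 := by
  intro r
  induction r with
  | zero =>
    intro _ m
    rw [pow_zero, zero_cast, Matrix.one_apply]
    by_cases hm : (m : ℕ) = 0
    · rw [if_pos (Fin.ext hm), if_pos hm]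
      simp
    · rw [if_neg (fun h => hm (congrArg Fin.val h)), if_neg hm]
  | succ r ih =>
    intro hr m
    have hrN : r < N + 2 := by omega
    rw [pow_succ', Matrix.mul_apply]
    have e : ∀ q : Fin (N + 2), L1N p N A m q * (L1N p N A ^ r) q ((0:ℕ) : Fin (N+2))
        = if (q : ℕ) = r then L1N p N A m q * ∏ s ∈ Finset.range r, A s else 0 := by
      intro q
      rw [ih (by omega) q, mul_ite, mul_zero]
    rw [Finset.sum_congr rfl fun q _ => e q, sum_ite_fin, dif_pos hrN, L1N_mkcol,
      if_neg (by omega)]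
    by_cases hm : (m : ℕ) = r + 1
    · rw [if_pos hm, if_pos hm, Finset.prod_range_succ, mul_comm]
    · rw [if_neg hm, if_neg hm, zero_mul]

lemma pow_colp1 (p N : ℕ) (A : ℕ → ℂ) (hp : 1 ≤ p) (hpN : p + 1 ≤ N + 1)
    (m : Fin (N + 2)) :
    (L1N p N A ^ (p + 1)) m ((0 : ℕ) : Fin (N + 2)) =
      Bmat p N A m ((0 : ℕ) : Fin (N + 2)) +
        (if (m : ℕ) = 0 then ∏ s ∈ Finset.range p, A s else 0) := by
  have hpN2 : p < N + 2 := by omega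
  rw [pow_succ', Matrix.mul_apply]
  have e : ∀ q : Fin (N + 2), L1N p N A m q * (L1N p N A ^ p) q ((0:ℕ) : Fin (N+2))
      = if (q : ℕ) = p then L1N p N A m q * ∏ s ∈ Finset.range p, A s else 0 := by
    intro q
    rw [pow_col0 p N A (by omega) p (le_refl p) q, mul_ite, mul_zero]
  rw [Finset.sum_congr rfl fun q _ => e q, sum_ite_fin, dif_pos hpN2, L1N_mkcol]
  rw [zero_cast, Bmat_mkcol]
  by_cases hm : (m : ℕ) = 0
  · rw [if_pos (by omega), one_mul, if_neg (by omega), if_pos hm, zero_add]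
  · by_cases hm2 : (m : ℕ) = p + 1
    · rw [if_neg (by omega), if_pos hm2, if_pos (by omega), if_neg hm, add_zero]
      simp only [zero_add]
      rw [Finset.prod_range_succ, mul_comm]
    · rw [if_neg (by omega), if_neg hm2, if_neg (by omega), if_neg hm, zero_mul, add_zero]

lemma comm_moment (p N : ℕ) (A : ℕ → ℂ) (hp : 1 ≤ p) (hpN : p + 1 ≤ N + 1) (k l : ℕ)
    (hl : 1 ≤ l) (hlp : l ≤ p) :
    (L1N p N A ^ k * Bmat p N A - Bmat p N A * L1N p N A ^ k)
        ((l - 1 : ℕ) : Fin (N + 2)) ((0 : ℕ) : Fin (N + 2)) =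
      momL1N p N A (k + (p + 1)) l - (∏ s ∈ Finset.range p, A s) * momL1N p N A k l := by
  have hl1 : l - 1 < N + 2 := by omega
  have hcast : ((l - 1 : ℕ) : Fin (N + 2)) = ⟨l - 1, hl1⟩ := by
    ext; simp [Nat.mod_eq_of_lt (show l - 1 < N + 2 by omega)]
  rw [Matrix.sub_apply]
  have hB0 : (Bmat p N A * (L1N p N A ^ k)) ((l-1:ℕ) : Fin (N+2)) ((0:ℕ) : Fin (N+2)) = 0 := by
    rw [Matrix.mul_apply, hcast]
    refine Finset.sum_eq_zero fun m _ => ?_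
    rw [Bmat_mkrow, if_neg (by omega), zero_mul]
  rw [hB0, sub_zero]
  have hmom : momL1N p N A (k + (p + 1)) l
      = (L1N p N A ^ k * Bmat p N A) ((l-1:ℕ) : Fin (N+2)) ((0:ℕ) : Fin (N+2))
        + (∏ s ∈ Finset.range p, A s) * momL1N p N A k l := by
    rw [momL1N, pow_add, Matrix.mul_apply]
    have e : ∀ m : Fin (N+2), (L1N p N A ^ k) ((l-1:ℕ) : Fin (N+2)) m
          * (L1N p N A ^ (p+1)) m ((0:ℕ) : Fin (N+2))
        = (L1N p N A ^ k) ((l-1:ℕ) : Fin (N+2)) m * Bmat p N A m ((0:ℕ) : Fin (N+2))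
          + (if (m:ℕ) = 0 then
              (L1N p N A ^ k) ((l-1:ℕ) : Fin (N+2)) m * ∏ s ∈ Finset.range p, A s else 0) := by
      intro m
      rw [pow_colp1 p N A hp hpN m, mul_add, mul_ite, mul_zero]
    rw [Finset.sum_congr rfl fun m _ => e m, Finset.sum_add_distrib, sum_ite_fin,
      dif_pos (show 0 < N + 2 by omega), ← Matrix.mul_apply]
    congr 1
    rw [momL1N, mul_comm, zero_cast]
  rw [hmom]
  ring


section deriv

variable {p N : ℕ} {I : Set ℝ} {a : ℤ → ℝ → ℂ}

lemma lax_entry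
    (haout : ∀ l : ℤ, l < 0 ∨ (N : ℤ) < l → ∀ t : ℝ, a l t = 0)
    (haode : ∀ i : ℤ, 0 ≤ i → i ≤ (N : ℤ) → ∀ t ∈ I, HasDerivWithinAt (a i)
      (a i t * (∏ j ∈ Finset.Icc 1 p, a (i + (j : ℤ)) t -
        ∏ j ∈ Finset.Icc 1 p, a (i - (j : ℤ)) t)) I t)
    (t : ℝ) (ht : t ∈ I) (i j : Fin (N + 2)) :
    HasDerivWithinAt (fun s => L1N p N (fun n : ℕ => a (n : ℤ) s) i j)
      ((L1N p N (fun n : ℕ => a (n : ℤ) t) * Bmat p N (fun n : ℕ => a (n : ℤ) t)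
        - Bmat p N (fun n : ℕ => a (n : ℤ) t) * L1N p N (fun n : ℕ => a (n : ℤ) t)) i j)
      I t := by
  have hA : ∀ n : ℕ, N < n → a (n : ℤ) t = 0 := fun n hn =>
    haout n (Or.inr (by exact_mod_cast hn)) t
  rw [comm_apply p N _ hA]
  by_cases h1 : (j : ℕ) = (i : ℕ) + p
  · have hf : (fun s => L1N p N (fun n : ℕ => a (n : ℤ) s) i j) = fun _ => (1 : ℂ) := by
      funext s
      rw [L1N_apply, if_pos h1]
    rw [hf, if_neg (by omega)]
    exact hasDerivWithinAt_const t I 1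
  by_cases h2 : (i : ℕ) = (j : ℕ) + 1
  · have hf : (fun s => L1N p N (fun n : ℕ => a (n : ℤ) s) i j)
        = fun s => a ((j : ℕ) : ℤ) s := by
      funext s
      rw [L1N_apply, if_neg h1, if_pos h2]
    have hjN : ((j : ℕ) : ℤ) ≤ (N : ℤ) := by
      have := i.isLt
      have := j.isLt
      omega
    have hd := haode ((j : ℕ) : ℤ) (Int.natCast_nonneg _) hjN t ht
    rw [hf, if_pos h2]
    convert hd using 1
    have hplus : (∏ s ∈ Finset.range (p + 1), a (((j : ℕ) + s : ℕ) : ℤ) t)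
        = a ((j : ℕ) : ℤ) t * ∏ m ∈ Finset.Icc 1 p, a (((j : ℕ) : ℤ) + (m : ℤ)) t := by
      rw [Finset.prod_range_succ' (fun s => a (((j : ℕ) + s : ℕ) : ℤ) t), mul_comm]
      congr 1
      · rw [← Finset.Ico_add_one_right_eq_Icc, Finset.prod_Ico_eq_prod_range]
        refine Finset.prod_congr (by rw [Nat.add_sub_cancel]) fun s _ => ?_
        congr 1
        omega
    rw [mul_sub, ← hplus]
    congr 1
    by_cases c2 : p ≤ (j : ℕ)
    · rw [if_pos c2]
      rw [Finset.prod_range_succ (fun s => a (((j : ℕ) - p + s : ℕ) : ℤ) t)]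
      have hlast : (((j : ℕ) - p + p : ℕ) : ℤ) = ((j : ℕ) : ℤ) := by omega
      rw [hlast, mul_comm]
      congr 1
      rw [← Finset.Ico_add_one_right_eq_Icc, Finset.prod_Ico_eq_prod_range,
        ← Finset.prod_range_reflect (fun s => a (((j : ℕ) - p + s : ℕ) : ℤ) t) p]
      refine Finset.prod_congr (by rw [Nat.add_sub_cancel]) fun s hs => ?_
      have hs' : s < p.succ - 1 := Finset.mem_range.mp hs
      congr 1
      omega
    · rw [if_neg c2]
      have hmem : (j : ℕ) + 1 ∈ Finset.Icc 1 p := Finset.mem_Icc.mpr ⟨by omega, by omega⟩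
      rw [Finset.prod_eq_zero hmem (haout _ (Or.inl (by push_cast; omega)) t), mul_zero]
  · have hf : (fun s => L1N p N (fun n : ℕ => a (n : ℤ) s) i j) = fun _ => (0 : ℂ) := by
      funext s
      rw [L1N_apply, if_neg h1, if_neg h2]
    rw [hf, if_neg h2]
    exact hasDerivWithinAt_const t I 0

lemma pow_entry_hasDeriv
    (haout : ∀ l : ℤ, l < 0 ∨ (N : ℤ) < l → ∀ t : ℝ, a l t = 0)
    (haode : ∀ i : ℤ, 0 ≤ i → i ≤ (N : ℤ) → ∀ t ∈ I, HasDerivWithinAt (a i)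
      (a i t * (∏ j ∈ Finset.Icc 1 p, a (i + (j : ℤ)) t -
        ∏ j ∈ Finset.Icc 1 p, a (i - (j : ℤ)) t)) I t)
    (t : ℝ) (ht : t ∈ I) (k : ℕ) (i j : Fin (N + 2)) :
    HasDerivWithinAt (fun s => (L1N p N (fun n : ℕ => a (n : ℤ) s) ^ k) i j)
      ((L1N p N (fun n : ℕ => a (n : ℤ) t) ^ k * Bmat p N (fun n : ℕ => a (n : ℤ) t)
        - Bmat p N (fun n : ℕ => a (n : ℤ) t) * L1N p N (fun n : ℕ => a (n : ℤ) t) ^ k) i j)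
      I t := by
  induction k generalizing i j with
  | zero =>
    have hf : (fun s => (L1N p N (fun n : ℕ => a (n : ℤ) s) ^ 0) i j)
        = fun _ => (1 : Matrix (Fin (N+2)) (Fin (N+2)) ℂ) i j := by
      funext s
      rw [pow_zero]
    rw [hf, pow_zero, one_mul, mul_one, sub_self, Matrix.zero_apply]
    exact hasDerivWithinAt_const t I _
  | succ k ih =>
    have hf : (fun s => (L1N p N (fun n : ℕ => a (n : ℤ) s) ^ (k+1)) i j)
        = fun s => ∑ m : Fin (N+2), (L1N p N (fun n : ℕ => a (n : ℤ) s) ^ k) i m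
            * L1N p N (fun n : ℕ => a (n : ℤ) s) m j := by
      funext s
      rw [pow_succ, Matrix.mul_apply]
    rw [hf]
    have hsum := HasDerivWithinAt.fun_sum (u := Finset.univ)
      (fun m (_ : m ∈ Finset.univ) => (ih i m).mul (lax_entry haout haode t ht m j))
    convert hsum using 1
    · rfl
    · rfl
    set Lt := L1N p N (fun n : ℕ => a (n : ℤ) t) with hLt
    set Bt := Bmat p N (fun n : ℕ => a (n : ℤ) t) with hBt
    have hmat : Lt ^ (k+1) * Bt - Bt * Lt ^ (k+1)
        = (Lt ^ k * Bt - Bt * Lt ^ k) * Lt + Lt ^ k * (Lt * Bt - Bt * Lt) := by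
      rw [pow_succ]
      noncomm_ring
    rw [hmat, Matrix.add_apply, Matrix.mul_apply, Matrix.mul_apply,
      ← Finset.sum_add_distrib]

lemma moment_hasDeriv (hp : 1 ≤ p) (hpN : p + 1 ≤ N + 1)
    (haout : ∀ l : ℤ, l < 0 ∨ (N : ℤ) < l → ∀ t : ℝ, a l t = 0)
    (haode : ∀ i : ℤ, 0 ≤ i → i ≤ (N : ℤ) → ∀ t ∈ I, HasDerivWithinAt (a i)
      (a i t * (∏ j ∈ Finset.Icc 1 p, a (i + (j : ℤ)) t -
        ∏ j ∈ Finset.Icc 1 p, a (i - (j : ℤ)) t)) I t)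
    (t : ℝ) (ht : t ∈ I) (k l : ℕ) (hl : 1 ≤ l) (hlp : l ≤ p) :
    HasDerivWithinAt (fun s => momL1N p N (fun n : ℕ => a (n : ℤ) s) k l)
      (momL1N p N (fun n : ℕ => a (n : ℤ) t) (k + (p + 1)) l
        - (∏ s ∈ Finset.range p, a ((s : ℕ) : ℤ) t)
          * momL1N p N (fun n : ℕ => a (n : ℤ) t) k l) I t := by
  have h := pow_entry_hasDeriv haout haode t ht k
    ((l - 1 : ℕ) : Fin (N + 2)) ((0 : ℕ) : Fin (N + 2))
  rw [comm_moment p N _ hp hpN k l hl hlp] at h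
  exact h

end deriv


end FRCaux

/-- The finite rank coefficients `C_0, …, C_{N+1}` are first integrals of the finite
Bogoyavlensky lattice `a_i' = a_i (∏_{j=1}^p a_{i+j} − ∏_{j=1}^p a_{i−j})`. -/
theorem FRC_C_first_integrals (p N : ℕ) (hp : 1 ≤ p) (hN : 2 * p - 1 ≤ N)
    (I : Set ℝ) (hI : I.OrdConnected)
    (a : ℤ → ℝ → ℂ)
    (haout : ∀ l : ℤ, l < 0 ∨ (N : ℤ) < l → ∀ t : ℝ, a l t = 0)
    (hane : ∀ i : ℤ, 0 ≤ i → i ≤ (N : ℤ) → ∀ t ∈ I, a i t ≠ 0)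
    (haode : ∀ i : ℤ, 0 ≤ i → i ≤ (N : ℤ) → ∀ t ∈ I, HasDerivWithinAt (a i)
      (a i t * (∏ j ∈ Finset.Icc 1 p, a (i + (j : ℤ)) t -
        ∏ j ∈ Finset.Icc 1 p, a (i - (j : ℤ)) t)) I t)
    (C : ℕ → ℝ → ℂ)
    (hCdiff : ∀ v, v ≤ N + 1 → ∀ t ∈ I, DifferentiableWithinAt ℝ (C v) I t)
    (hCrel : ∀ k, N + 2 ≤ k → ∀ l, 1 ≤ l → l ≤ p → ∀ t ∈ I,
      momL1N p N (fun n : ℕ => a (n : ℤ) t) k l =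
        ∑ v ∈ Finset.range (N + 2), C v t *
          momL1N p N (fun n : ℕ => a (n : ℤ) t) (k - v - 1) l)
    (hΔ : ∀ t ∈ I, Matrix.det (Matrix.of fun i j : Fin (N + 2) =>
        momL1N p N (fun n : ℕ => a (n : ℤ) t) ((i : ℕ) / p + (j : ℕ)) ((i : ℕ) % p + 1)) ≠ 0) :
    ∀ v, v ≤ N + 1 → ∀ t ∈ I, ∀ s ∈ I, C v t = C v s := by
  intro v hv t ht s hs
  by_cases hne : (interior I).Nonempty
  · have hconv : Convex ℝ I := convex_iff_ordConnected.mpr hI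
    have hud : UniqueDiffOn ℝ I := uniqueDiffOn_convex hconv hne
    have hpN : p + 1 ≤ N + 1 := by omega
    have hzero : ∀ x ∈ I, ∀ w, w ≤ N + 1 → derivWithin (C w) I x = 0 := by
      intro x hx w hw
      have hrel0 : ∀ k, N + 2 ≤ k → ∀ l, 1 ≤ l → l ≤ p →
          (∑ u ∈ Finset.range (N + 2), derivWithin (C u) I x
            * momL1N p N (fun n : ℕ => a (n : ℤ) x) (k - u - 1) l) = 0 := by
        intro k hk l hl hlp
        have hS : ∀ k', HasDerivWithinAt
            (fun y => momL1N p N (fun n : ℕ => a (n : ℤ) y) k' l)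
            (momL1N p N (fun n : ℕ => a (n : ℤ) x) (k' + (p + 1)) l
              - (∏ u ∈ Finset.range p, a ((u : ℕ) : ℤ) x)
                * momL1N p N (fun n : ℕ => a (n : ℤ) x) k' l) I x :=
          fun k' => FRCaux.moment_hasDeriv hp hpN haout haode x hx k' l hl hlp
        have hgl : HasDerivWithinAt
            (fun y => ∑ u ∈ Finset.range (N + 2),
              C u y * momL1N p N (fun n : ℕ => a (n : ℤ) y) (k - u - 1) l)
            (∑ u ∈ Finset.range (N + 2),
              (derivWithin (C u) I x * momL1N p N (fun n : ℕ => a (n : ℤ) x) (k - u - 1) l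
                + C u x * (momL1N p N (fun n : ℕ => a (n : ℤ) x) ((k - u - 1) + (p + 1)) l
                  - (∏ u' ∈ Finset.range p, a ((u' : ℕ) : ℤ) x)
                    * momL1N p N (fun n : ℕ => a (n : ℤ) x) (k - u - 1) l))) I x := by
          refine HasDerivWithinAt.fun_sum fun u hu => ?_
          have hu' : u ≤ N + 1 := by
            have := Finset.mem_range.mp hu
            omega
          exact ((hCdiff u hu' x hx).hasDerivWithinAt).mul (hS (k - u - 1))
        have hgr : HasDerivWithinAt
            (fun y => ∑ u ∈ Finset.range (N + 2),
              C u y * momL1N p N (fun n : ℕ => a (n : ℤ) y) (k - u - 1) l)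
            (momL1N p N (fun n : ℕ => a (n : ℤ) x) (k + (p + 1)) l
              - (∏ u' ∈ Finset.range p, a ((u' : ℕ) : ℤ) x)
                * momL1N p N (fun n : ℕ => a (n : ℤ) x) k l) I x :=
          (hS k).congr (fun y hy => (hCrel k hk l hl hlp y hy).symm)
            ((hCrel k hk l hl hlp x hx).symm)
        have hEq := (hud x hx).eq_deriv _ hgl hgr
        have e1 : ∀ u : ℕ,
            derivWithin (C u) I x * momL1N p N (fun n : ℕ => a (n : ℤ) x) (k - u - 1) l
              + C u x * (momL1N p N (fun n : ℕ => a (n : ℤ) x) ((k - u - 1) + (p + 1)) l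
                - (∏ u' ∈ Finset.range p, a ((u' : ℕ) : ℤ) x)
                  * momL1N p N (fun n : ℕ => a (n : ℤ) x) (k - u - 1) l)
            = derivWithin (C u) I x * momL1N p N (fun n : ℕ => a (n : ℤ) x) (k - u - 1) l
              + (C u x * momL1N p N (fun n : ℕ => a (n : ℤ) x) ((k - u - 1) + (p + 1)) l
                - (∏ u' ∈ Finset.range p, a ((u' : ℕ) : ℤ) x)
                  * (C u x * momL1N p N (fun n : ℕ => a (n : ℤ) x) (k - u - 1) l)) := by
          intro u
          ring
        rw [Finset.sum_congr rfl fun u _ => e1 u, Finset.sum_add_distrib,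
          Finset.sum_sub_distrib, ← Finset.mul_sum] at hEq
        have hidx : (∑ u ∈ Finset.range (N + 2),
            C u x * momL1N p N (fun n : ℕ => a (n : ℤ) x) ((k - u - 1) + (p + 1)) l)
            = ∑ u ∈ Finset.range (N + 2),
              C u x * momL1N p N (fun n : ℕ => a (n : ℤ) x) ((k + (p + 1)) - u - 1) l := by
          refine Finset.sum_congr rfl fun u hu => ?_
          have := Finset.mem_range.mp hu
          congr 2
          omega
        rw [hidx, ← hCrel (k + (p + 1)) (by omega) l hl hlp x hx,
          ← hCrel k hk l hl hlp x hx] at hEq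
        linear_combination hEq
      have hdet := hΔ x hx
      set M := (Matrix.of fun i j : Fin (N + 2) =>
        momL1N p N (fun n : ℕ => a (n : ℤ) x) ((i : ℕ) / p + (j : ℕ)) ((i : ℕ) % p + 1))
        with hMdef
      have hmv : M.mulVec (fun w : Fin (N + 2) => derivWithin (C (N + 1 - (w : ℕ))) I x)
          = 0 := by
        funext i0
        have hk0 : N + 2 ≤ (i0 : ℕ) / p + (N + 2) := Nat.le_add_left _ _
        have hlp0 : (i0 : ℕ) % p + 1 ≤ p := by
          have := Nat.mod_lt (i0 : ℕ) (show 0 < p by omega)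
          omega
        have hr := hrel0 ((i0 : ℕ) / p + (N + 2)) hk0 ((i0 : ℕ) % p + 1) (by omega) hlp0
        show (∑ w : Fin (N + 2), M i0 w * derivWithin (C (N + 1 - (w : ℕ))) I x) = 0
        rw [← hr, ← Fin.sum_univ_eq_sum_range (fun u =>
          derivWithin (C u) I x * momL1N p N (fun n : ℕ => a (n : ℤ) x)
            (((i0 : ℕ) / p + (N + 2)) - u - 1) ((i0 : ℕ) % p + 1)) (N + 2)]
        refine Fintype.sum_bijective Fin.rev (Fin.rev_involutive.bijective) _ _ fun w => ?_
        have hvr : ((Fin.rev w : Fin (N + 2)) : ℕ) = N + 1 - (w : ℕ) := by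
          rw [Fin.val_rev]
          omega
        have hw := w.isLt
        rw [hvr]
        have hMe : M i0 w = momL1N p N (fun n : ℕ => a (n : ℤ) x)
            ((i0 : ℕ) / p + (w : ℕ)) ((i0 : ℕ) % p + 1) := rfl
        rw [hMe]
        have hidx2 : ((i0 : ℕ) / p + (N + 2)) - (N + 1 - (w : ℕ)) - 1
            = (i0 : ℕ) / p + (w : ℕ) := by
          generalize (i0 : ℕ) / p = q
          omega
        rw [hidx2, mul_comm]
      have hGzero : (fun w : Fin (N + 2) => derivWithin (C (N + 1 - (w : ℕ))) I x) = 0 := by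
        have hu : IsUnit M.det := Ne.isUnit hdet
        have h2 := congrArg (fun u => Matrix.mulVec M⁻¹ u) hmv
        simp only [Matrix.mulVec_mulVec, Matrix.nonsing_inv_mul M hu, Matrix.one_mulVec,
          Matrix.mulVec_zero] at h2
        exact h2
      have hfin := congrFun hGzero ⟨N + 1 - w, by omega⟩
      simp only [Pi.zero_apply] at hfin
      have : N + 1 - (((⟨N + 1 - w, by omega⟩ : Fin (N + 2))) : ℕ) = w := by
        simp only [FRCaux.val_mk']
        omega
      rwa [this] at hfin
    have hf : ∀ y ∈ I, HasDerivWithinAt (C v) (derivWithin (C v) I y) I y :=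
      fun y hy => (hCdiff v hv y hy).hasDerivWithinAt
    have hbound : ∀ y ∈ I, ‖derivWithin (C v) I y‖ ≤ (0 : ℝ) := by
      intro y hy
      rw [hzero y hy v hv]
      simp
    have hb := Convex.norm_image_sub_le_of_norm_hasDerivWithin_le hf hbound hconv hs ht
    rw [zero_mul] at hb
    have : C v t - C v s = 0 := norm_le_zero_iff.mp hb
    exact sub_eq_zero.mp this
  · have hts : t = s := by
      by_contra hts
      apply hne
      rcases lt_or_gt_of_ne hts with h | h
      · refine ⟨(t + s) / 2, interior_mono (hI.out ht hs) ?_⟩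
        rw [interior_Icc]
        constructor <;> · linarith
      · refine ⟨(s + t) / 2, interior_mono (hI.out hs ht) ?_⟩
        rw [interior_Icc]
        constructor <;> · linarith
    rw [hts]
end
end

section
/- Let p ≥ 1, N ≥ 2p−1, and let b_0,…,b_N : I → ℂ be differentiable nowhere-vanishing functions on an interval I solving the finite Bogoyavlensky lattice b_i' = b_i(Σ_{j=1}^p b_{i+j} − Σ_{j=1}^p b_{i−j}) for i = 0,…,N (with b_l ≡ 0 for l < 0 and l > N). Let S̃_k^n(t) := (L2_N(t)^k)_{0,n−1}. Suppose C̃_0,…,C̃_{N+p} : I → ℂ are differentiable and satisfy S̃_k^l(t) = Σ_{v=0}^{N+p} C̃_v(t)·S̃_{k−v−1}^l(t) for all integers k ≥ N+p+1, all 1 ≤ l ≤ p, and all t ∈ I, and suppose Δ̃_{N+p}(t) ≠ 0 for all t ∈ I, where Δ̃_{N+p}(t) = det(α̃_{ij}(t))_{i,j=0}^{N+p} with α̃_{ij} = S̃_{i+⌊j/p⌋}^{(j mod p)+1}. Then each C̃_v is constant on I (i.e., C̃_0,…,C̃_{N+p} are first integrals of the lattice). -/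
open scoped BigOperators

noncomputable section

/-- The `(N+p+1)×(N+p+1)` matrix `L2_N`: `(L2_N)_{i,i+1} = 1`, `(L2_N)_{i+p,i} = b_i`,
all other entries zero. -/
def L2N (p N : ℕ) (b : ℕ → ℂ) : Matrix (Fin (N + p + 1)) (Fin (N + p + 1)) ℂ :=
  Matrix.of fun i j => if (j : ℕ) = (i : ℕ) + 1 then 1
    else if (i : ℕ) = (j : ℕ) + p then b (j : ℕ) else 0

open Fin.NatCast in
/-- The moments of `L2_N`: `S̃_k^n = (L2_N^k)_{0,n−1}`. -/
def momL2N (p N : ℕ) (b : ℕ → ℂ) (k n : ℕ) : ℂ :=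
  (L2N p N b ^ k) ((0 : ℕ) : Fin (N + p + 1)) ((n - 1 : ℕ) : Fin (N + p + 1))

def FRCauxA (p N : ℕ) (bz : ℤ → ℂ) : Matrix (Fin (N + p + 1)) (Fin (N + p + 1)) ℂ :=
  Matrix.of fun i j => if (j : ℕ) = (i : ℕ) + (p + 1) then 1
    else if (i : ℕ) = (j : ℕ) then ∑ m ∈ Finset.range (p + 1), bz ((i : ℕ) - (m : ℤ)) else 0

lemma FRCsum_ite {n : ℕ} (c : ℕ) (g : Fin n → ℂ) :
    (∑ m : Fin n, if (m : ℕ) = c then g m else 0) = if h : c < n then g ⟨c, h⟩ else 0 := by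
  split
  · next h =>
    rw [Finset.sum_eq_single (⟨c, h⟩ : Fin n)]
    · simp
    · intro m _ hm; rw [if_neg]; simpa [Fin.ext_iff] using hm
    · simp
  · next h =>
    apply Finset.sum_eq_zero; intro m _
    rw [if_neg]
    have := m.isLt; omega

lemma FRCsum_ite' {n : ℕ} (c a : ℕ) (g : Fin n → ℂ) :
    (∑ m : Fin n, if c = (m : ℕ) + a then g m else 0) =
      if h : a ≤ c ∧ c - a < n then g ⟨c - a, h.2⟩ else 0 := by
  have : ∀ m : Fin n, (if c = (m : ℕ) + a then g m else 0) =
      (if (m : ℕ) = c - a ∧ a ≤ c then g m else 0) := by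
    intro m; congr 1; simp only [eq_iff_iff]; omega
  rw [Finset.sum_congr rfl fun m _ => this m]
  by_cases hac : a ≤ c
  · simp only [hac, and_true, true_and]
    rw [FRCsum_ite]
  · rw [dif_neg (fun hh => hac hh.1)]
    apply Finset.sum_eq_zero; intro m _; rw [if_neg (fun hh => hac hh.2)]


lemma FRCtele1 (bz : ℤ → ℂ) (p : ℕ) (c : ℤ) :
    ∑ k ∈ Finset.range (p + 1), bz (c + 1 - (k : ℤ)) =
      bz (c + 1) + ∑ k ∈ Finset.range p, bz (c - (k : ℤ)) := by
  rw [Finset.sum_range_succ']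
  have h1 : ∀ k ∈ Finset.range p, bz (c + 1 - ((k + 1 : ℕ) : ℤ)) = bz (c - (k : ℤ)) := by
    intro k _; congr 1; push_cast; ring
  rw [Finset.sum_congr rfl h1]
  norm_num [add_comm]

lemma FRCrefl (bz : ℤ → ℂ) (p : ℕ) (c : ℤ) :
    ∑ k ∈ Finset.range (p + 1), bz (c + (p : ℤ) - (k : ℤ)) =
      ∑ k ∈ Finset.range (p + 1), bz (c + (k : ℤ)) := by
  rw [← Finset.sum_range_reflect]
  apply Finset.sum_congr rfl
  intro k hk
  simp only [Finset.mem_range] at hk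
  congr 1; omega

lemma FRCrangeIcc (f : ℕ → ℂ) (p : ℕ) :
    ∑ k ∈ Finset.range (p + 1), f k = f 0 + ∑ k ∈ Finset.Icc 1 p, f k := by
  rw [← Finset.Ico_add_one_right_eq_Icc, Finset.sum_Ico_eq_sum_range, Finset.sum_range_succ']
  have h1 : ∀ k ∈ Finset.range (p + 1 - 1), f (1 + k) = f (k + 1) := by
    intro k _; rw [Nat.add_comm]
  rw [Finset.sum_congr (by congr 1) h1, Nat.add_sub_cancel]
  ring

lemma FRClax (p N : ℕ) (hp : 1 ≤ p) (bz : ℤ → ℂ)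
    (h0 : ∀ l : ℤ, l < 0 ∨ (N : ℤ) < l → bz l = 0) :
    FRCauxA p N bz * L2N p N (fun m : ℕ => bz m) -
      L2N p N (fun m : ℕ => bz m) * FRCauxA p N bz =
    Matrix.of fun i j : Fin (N + p + 1) => if (i : ℕ) = (j : ℕ) + p then
      bz ((j : ℕ) : ℤ) * (∑ m ∈ Finset.Icc 1 p, bz (((j : ℕ) : ℤ) + (m : ℤ)) -
        ∑ m ∈ Finset.Icc 1 p, bz (((j : ℕ) : ℤ) - (m : ℤ)))
    else 0 := by
  ext i j
  have hi := i.isLt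
  have hj := j.isLt
  set L := L2N p N (fun m : ℕ => bz m) with hL
  have e1 : ∀ m : Fin (N + p + 1), FRCauxA p N bz i m * L m j
      = (if (m : ℕ) = (i : ℕ) + (p + 1) then L m j else 0)
        + (if (m : ℕ) = (i : ℕ) then
            (∑ k ∈ Finset.range (p + 1), bz (((i : ℕ) : ℤ) - (k : ℤ))) * L m j else 0) := by
    intro m
    simp only [FRCauxA, Matrix.of_apply]
    split_ifs <;>
      first | ring1 | omega | (exfalso; omega) |
        (rename_i hh; rw [show ((m : ℕ) : ℤ) = ((i : ℕ) : ℤ) by omega]; ring1)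
  have e2 : ∀ m : Fin (N + p + 1), L i m * FRCauxA p N bz m j
      = (if (j : ℕ) = (m : ℕ) + (p + 1) then L i m else 0)
        + (if (m : ℕ) = (j : ℕ) then
            L i m * (∑ k ∈ Finset.range (p + 1), bz (((j : ℕ) : ℤ) - (k : ℤ))) else 0) := by
    intro m
    simp only [FRCauxA, Matrix.of_apply]
    split_ifs <;>
      first | ring1 | omega | (exfalso; omega) |
        (rename_i hh; rw [show ((m : ℕ) : ℤ) = ((j : ℕ) : ℤ) by omega]; ring1)
  rw [Matrix.sub_apply, Matrix.mul_apply, Matrix.mul_apply,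
    Finset.sum_congr rfl fun m _ => e1 m, Finset.sum_congr rfl fun m _ => e2 m,
    Finset.sum_add_distrib, Finset.sum_add_distrib, FRCsum_ite, FRCsum_ite, FRCsum_ite',
    FRCsum_ite, dif_pos hi, dif_pos hj]
  simp only [Fin.eta, hL, L2N, Matrix.of_apply, Fin.val_mk]
  by_cases hji : (j : ℕ) = (i : ℕ) + 1
  · have hT1 : (if h : (i : ℕ) + (p + 1) < N + p + 1 then
        (if (j : ℕ) = (i : ℕ) + (p + 1) + 1 then (1 : ℂ)
          else if (i : ℕ) + (p + 1) = (j : ℕ) + p then bz (((j : ℕ) : ℤ)) else 0)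
      else 0) = bz (((i : ℕ) : ℤ) + 1) := by
      by_cases hc : (i : ℕ) + (p + 1) < N + p + 1
      · rw [dif_pos hc, if_neg (by omega), if_pos (by omega)]
        congr 1; omega
      · rw [dif_neg hc]
        exact (h0 _ (Or.inr (by omega))).symm
    have hT3 : (if h : p + 1 ≤ (j : ℕ) ∧ (j : ℕ) - (p + 1) < N + p + 1 then
        (if (j : ℕ) - (p + 1) = (i : ℕ) + 1 then (1 : ℂ)
          else if (i : ℕ) = (j : ℕ) - (p + 1) + p then bz ((((j : ℕ) - (p + 1) : ℕ)) : ℤ) else 0)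
      else 0) = bz (((i : ℕ) : ℤ) - (p : ℤ)) := by
      by_cases hc : p + 1 ≤ (j : ℕ)
      · rw [dif_pos ⟨hc, by omega⟩, if_neg (by omega), if_pos (by omega)]
        congr 1; omega
      · rw [dif_neg (fun hh => hc hh.1)]
        exact (h0 _ (Or.inl (by omega))).symm
    rw [hT1, hT3, if_pos hji, if_neg (show ¬ (i : ℕ) = (j : ℕ) + p by omega),
      show (((j : ℕ) : ℤ)) = ((i : ℕ) : ℤ) + 1 from by omega,
      FRCtele1 bz p (((i : ℕ) : ℤ)), Finset.sum_range_succ]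
    ring1
  by_cases hij : (i : ℕ) = (j : ℕ) + p
  · have hT1 : (if h : (i : ℕ) + (p + 1) < N + p + 1 then
        (if (j : ℕ) = (i : ℕ) + (p + 1) + 1 then (1 : ℂ)
          else if (i : ℕ) + (p + 1) = (j : ℕ) + p then bz (((j : ℕ) : ℤ)) else 0)
      else 0) = 0 := by
      split_ifs <;> first | rfl | (exfalso; omega)
    have hT3 : (if h : p + 1 ≤ (j : ℕ) ∧ (j : ℕ) - (p + 1) < N + p + 1 then
        (if (j : ℕ) - (p + 1) = (i : ℕ) + 1 then (1 : ℂ)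
          else if (i : ℕ) = (j : ℕ) - (p + 1) + p then bz ((((j : ℕ) - (p + 1) : ℕ)) : ℤ) else 0)
      else 0) = 0 := by
      split_ifs <;> first | rfl | (exfalso; omega)
    rw [hT1, hT3, if_neg hji, if_pos hij, if_pos hij,
      show (((i : ℕ) : ℤ)) = ((j : ℕ) : ℤ) + (p : ℤ) from by omega,
      FRCrefl bz p (((j : ℕ) : ℤ)),
      FRCrangeIcc (fun k : ℕ => bz (((j : ℕ) : ℤ) + (k : ℤ))) p,
      FRCrangeIcc (fun k : ℕ => bz (((j : ℕ) : ℤ) - (k : ℤ))) p]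
    norm_num
    ring1
  · by_cases hj2 : (j : ℕ) = (i : ℕ) + (p + 1) + 1
    · rw [dif_pos (by omega : (i : ℕ) + (p + 1) < N + p + 1), if_pos hj2,
        dif_pos (⟨by omega, by omega⟩ : p + 1 ≤ (j : ℕ) ∧ (j : ℕ) - (p + 1) < N + p + 1),
        if_pos (by omega : (j : ℕ) - (p + 1) = (i : ℕ) + 1),
        if_neg hji, if_neg hij, if_neg hij]
      ring1
    · have hT1 : (if h : (i : ℕ) + (p + 1) < N + p + 1 then
          (if (j : ℕ) = (i : ℕ) + (p + 1) + 1 then (1 : ℂ)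
            else if (i : ℕ) + (p + 1) = (j : ℕ) + p then bz (((j : ℕ) : ℤ)) else 0)
        else 0) = 0 := by
        split_ifs <;> first | rfl | (exfalso; omega)
      have hT3 : (if h : p + 1 ≤ (j : ℕ) ∧ (j : ℕ) - (p + 1) < N + p + 1 then
          (if (j : ℕ) - (p + 1) = (i : ℕ) + 1 then (1 : ℂ)
            else if (i : ℕ) = (j : ℕ) - (p + 1) + p then bz ((((j : ℕ) - (p + 1) : ℕ)) : ℤ) else 0)
        else 0) = 0 := by
        split_ifs <;> first | rfl | (exfalso; omega)
      rw [hT1, hT3, if_neg hji, if_neg hij, if_neg hij]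
      ring1


lemma FRCdet_hasDeriv {n : ℕ} {I : Set ℝ} {t : ℝ} {M : ℝ → Matrix (Fin n) (Fin n) ℂ}
    {M' : Matrix (Fin n) (Fin n) ℂ}
    (h : ∀ i j, HasDerivWithinAt (fun s => M s i j) (M' i j) I t) :
    HasDerivWithinAt (fun s => (M s).det) (Matrix.trace ((M t).adjugate * M')) I t := by
  have hprod : ∀ σ : Equiv.Perm (Fin n),
      HasDerivWithinAt (fun s => ∏ i : Fin n, M s (σ i) i)
        (∑ i : Fin n, (∏ j ∈ Finset.univ.erase i, M t (σ j) j) • M' (σ i) i) I t :=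
    fun σ => HasDerivWithinAt.fun_finsetProd (fun i _ => h (σ i) i)
  have hdet : HasDerivWithinAt (fun s => (M s).det)
      (∑ σ : Equiv.Perm (Fin n), ((Equiv.Perm.sign σ : ℤ) : ℂ) *
        ∑ i : Fin n, (∏ j ∈ Finset.univ.erase i, M t (σ j) j) • M' (σ i) i) I t := by
    simp only [Matrix.det_apply']
    exact HasDerivWithinAt.fun_sum (fun σ _ => ((hprod σ).const_mul _))
  convert hdet using 1
  have h2 : ∀ i : Fin n, ((M t).updateCol i fun r => M' r i).det
      = ∑ σ : Equiv.Perm (Fin n), ((Equiv.Perm.sign σ : ℤ) : ℂ) *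
          ((∏ j ∈ Finset.univ.erase i, M t (σ j) j) * M' (σ i) i) := by
    intro i
    rw [Matrix.det_apply']
    refine Finset.sum_congr rfl fun σ _ => ?_
    congr 1
    rw [← Finset.mul_prod_erase Finset.univ _ (Finset.mem_univ i)]
    rw [Matrix.updateCol_self]
    rw [Finset.prod_congr rfl (fun j hj => ?_), mul_comm]
    rw [Matrix.updateCol_apply, if_neg (Finset.ne_of_mem_erase hj)]
  have h1 : Matrix.trace ((M t).adjugate * M') =
      ∑ i : Fin n, ((M t).updateCol i fun r => M' r i).det := by
    rw [Matrix.trace]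
    refine Finset.sum_congr rfl fun i _ => ?_
    rw [Matrix.diag_apply, ← Matrix.cramer_apply, Matrix.cramer_eq_adjugate_mulVec]
    simp [Matrix.mul_apply, Matrix.mulVec, dotProduct]
  rw [h1, Finset.sum_congr rfl (fun i _ => h2 i), Finset.sum_comm]
  refine Finset.sum_congr rfl fun σ _ => ?_
  rw [Finset.mul_sum]
  refine Finset.sum_congr rfl fun i _ => ?_
  rw [smul_eq_mul]

lemma FRCtrace_zero {n : ℕ} (M A : Matrix (Fin n) (Fin n) ℂ) :
    Matrix.trace (M.adjugate * (A * M - M * A)) = 0 := by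
  have e1 : Matrix.trace (M.adjugate * (A * M)) = Matrix.trace ((M * M.adjugate) * A) := by
    rw [← Matrix.mul_assoc, Matrix.trace_mul_comm, ← Matrix.mul_assoc]
  have e2 : Matrix.trace (M.adjugate * (M * A)) = Matrix.trace ((M * M.adjugate) * A) := by
    rw [← Matrix.mul_assoc, Matrix.mul_adjugate, Matrix.adjugate_mul]
  rw [Matrix.mul_sub, Matrix.trace_sub, e1, e2, sub_self]

lemma FRCdet_const (p N : ℕ) (hp : 1 ≤ p) {I : Set ℝ} (hI : I.OrdConnected)
    (b : ℤ → ℝ → ℂ)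
    (hbout : ∀ l : ℤ, l < 0 ∨ (N : ℤ) < l → ∀ t : ℝ, b l t = 0)
    (hbode : ∀ i : ℤ, 0 ≤ i → i ≤ (N : ℤ) → ∀ t ∈ I, HasDerivWithinAt (b i)
      (b i t * (∑ j ∈ Finset.Icc 1 p, b (i + (j : ℤ)) t -
        ∑ j ∈ Finset.Icc 1 p, b (i - (j : ℤ)) t)) I t)
    (x : ℂ) {t s : ℝ} (ht : t ∈ I) (hs : s ∈ I) :
    (x • (1 : Matrix (Fin (N + p + 1)) (Fin (N + p + 1)) ℂ)
        - L2N p N (fun m : ℕ => b (m : ℤ) t)).det =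
    (x • (1 : Matrix (Fin (N + p + 1)) (Fin (N + p + 1)) ℂ)
        - L2N p N (fun m : ℕ => b (m : ℤ) s)).det := by
  set f : ℝ → ℂ := fun u =>
    (x • (1 : Matrix (Fin (N + p + 1)) (Fin (N + p + 1)) ℂ)
      - L2N p N (fun m : ℕ => b (m : ℤ) u)).det with hf
  have hderiv : ∀ u ∈ I, HasDerivWithinAt f 0 I u := by
    intro u hu
    set bz : ℤ → ℂ := fun l => b l u with hbz
    set Lu := L2N p N (fun m : ℕ => bz (m : ℤ)) with hLu
    set Au := FRCauxA p N bz with hAu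
    set Mu := x • (1 : Matrix (Fin (N + p + 1)) (Fin (N + p + 1)) ℂ) - Lu with hMu
    have hcomm : Au * Mu - Mu * Au = -(Au * Lu - Lu * Au) := by
      rw [hMu, Matrix.mul_sub, Matrix.sub_mul, Matrix.mul_smul, Matrix.smul_mul,
        mul_one, one_mul]
      abel
    have hentry : ∀ i j, HasDerivWithinAt
        (fun u' => (x • (1 : Matrix (Fin (N + p + 1)) (Fin (N + p + 1)) ℂ)
          - L2N p N (fun m : ℕ => b (m : ℤ) u')) i j) ((Au * Mu - Mu * Au) i j) I u := by
      intro i j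
      have hR := FRClax p N hp bz (fun l hl => hbout l hl u)
      rw [hcomm, hAu, hLu, hR]
      simp only [Matrix.neg_apply, Matrix.of_apply]
      have hfun : ∀ u' : ℝ, (x • (1 : Matrix (Fin (N + p + 1)) (Fin (N + p + 1)) ℂ)
            - L2N p N fun m : ℕ => b ((m : ℕ) : ℤ) u') i j
          = (x * (if i = j then 1 else 0))
            - (if (j : ℕ) = (i : ℕ) + 1 then 1
                else if (i : ℕ) = (j : ℕ) + p then b (((j : ℕ) : ℕ) : ℤ) u' else 0) := by
        intro u'
        simp [L2N, Matrix.sub_apply, Matrix.smul_apply, Matrix.one_apply, Matrix.of_apply,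
          smul_eq_mul]
      simp only [hfun]
      by_cases hc1 : (j : ℕ) = (i : ℕ) + 1
      · rw [if_neg (by omega : ¬ (i : ℕ) = (j : ℕ) + p), neg_zero]
        simp only [if_pos hc1]
        exact hasDerivWithinAt_const _ _ _
      · by_cases hc2 : (i : ℕ) = (j : ℕ) + p
        · simp only [if_neg hc1, if_pos hc2]
          have hj2 : ((j : ℕ) : ℤ) ≤ (N : ℤ) := by have := i.isLt; omega
          have hd := (hbode ((j : ℕ) : ℤ) (Int.ofNat_nonneg _) hj2 u hu).const_sub
            (x * (if i = j then 1 else 0))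
          exact hd
        · simp only [if_neg hc1, if_neg hc2, neg_zero]
          exact hasDerivWithinAt_const _ _ _
    have h0 := FRCdet_hasDeriv (M' := Au * Mu - Mu * Au) hentry
    rw [hMu] at h0
    have := FRCtrace_zero Mu Au
    rw [hMu] at this
    rw [hf]
    convert h0 using 1
    exact this.symm
  have hconv : Convex ℝ I := hI.convex
  have hb := hconv.norm_image_sub_le_of_norm_hasDerivWithin_le
    (f' := fun _ => (0 : ℂ)) (C := 0) hderiv (fun y hy => by simp) hs ht
  have : ‖f t - f s‖ ≤ 0 := by simpa using hb
  have h2 : f t - f s = 0 := by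
    have := norm_nonneg (f t - f s)
    have : ‖f t - f s‖ = 0 := le_antisymm ‹‖f t - f s‖ ≤ 0› this
    exact norm_eq_zero.mp this
  have := sub_eq_zero.mp h2
  exact this

open Fin.NatCast in
lemma FRCmomrec (p N : ℕ) (bb : ℕ → ℂ) (k : ℕ) (hk : N + p + 1 ≤ k) (l : ℕ) :
    momL2N p N bb k l = ∑ v ∈ Finset.range (N + p + 1),
      (-((L2N p N bb).charpoly.coeff (N + p - v))) * momL2N p N bb (k - v - 1) l := by
  simp only [momL2N]
  set L := L2N p N bb with hL
  have hdeg : L.charpoly.natDegree = N + p + 1 := by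
    rw [Matrix.charpoly_natDegree_eq_dim, Fintype.card_fin]
  have hCH := Matrix.aeval_self_charpoly L
  rw [Polynomial.aeval_eq_sum_range, hdeg, Finset.sum_range_succ] at hCH
  have hmonic : L.charpoly.coeff (N + p + 1) = 1 := by
    have := (Matrix.charpoly_monic L).coeff_natDegree
    rwa [hdeg] at this
  rw [hmonic, one_smul] at hCH
  have hpow : L ^ (N + p + 1) = ∑ i ∈ Finset.range (N + p + 1), (-(L.charpoly.coeff i)) • L ^ i := by
    have : L ^ (N + p + 1) = -(∑ i ∈ Finset.range (N + p + 1), L.charpoly.coeff i • L ^ i) := by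
      rw [eq_neg_iff_add_eq_zero]
      have h' : L ^ (N + p + 1) + ∑ i ∈ Finset.range (N + p + 1), L.charpoly.coeff i • L ^ i
          = ∑ i ∈ Finset.range (N + p + 1), L.charpoly.coeff i • L ^ i + L ^ (N + p + 1) :=
        add_comm _ _
      rw [h']
      exact hCH
    rw [this, ← Finset.sum_neg_distrib]
    exact Finset.sum_congr rfl fun i _ => (neg_smul _ _).symm
  have hks : k - (N + p + 1) + (N + p + 1) = k := Nat.sub_add_cancel hk
  have hLk : L ^ k = ∑ i ∈ Finset.range (N + p + 1), (-(L.charpoly.coeff i)) • L ^ (k - (N + p + 1) + i) := by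
    calc L ^ k = L ^ (k - (N + p + 1)) * L ^ (N + p + 1) := by rw [← pow_add, hks]
    _ = ∑ i ∈ Finset.range (N + p + 1), (-(L.charpoly.coeff i)) • (L ^ (k - (N + p + 1)) * L ^ i) := by
        rw [hpow, Finset.mul_sum]
        exact Finset.sum_congr rfl fun i _ => (Matrix.mul_smul _ _ _)
    _ = _ := Finset.sum_congr rfl fun i _ => by rw [← pow_add]
  have key : ∀ m : Fin (N + p + 1), (L ^ k) ((0 : ℕ) : Fin (N + p + 1)) m
      = ∑ i ∈ Finset.range (N + p + 1), (-(L.charpoly.coeff i)) * (L ^ (k - (N + p + 1) + i)) ((0 : ℕ) : Fin (N + p + 1)) m := by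
    intro m
    rw [hLk, Matrix.sum_apply]
    exact Finset.sum_congr rfl fun i _ => by rw [Matrix.smul_apply, smul_eq_mul]
  show (L ^ k) _ _ = _
  rw [key]
  rw [← Finset.sum_range_reflect]
  refine Finset.sum_congr rfl fun v hv => ?_
  simp only [Finset.mem_range] at hv
  have h1 : N + p + 1 - 1 - v = N + p - v := by omega
  have h2 : k - (N + p + 1) + (N + p - v) = k - v - 1 := by omega
  rw [h1, h2]

lemma FRCcharpoly_eval {n : ℕ} (M : Matrix (Fin n) (Fin n) ℂ) (x : ℂ) :
    (Matrix.charpoly M).eval x = (x • (1 : Matrix (Fin n) (Fin n) ℂ) - M).det := by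
  rw [Matrix.charpoly, ← Polynomial.coe_evalRingHom, RingHom.map_det]
  congr 1
  ext i j
  simp [Matrix.charmatrix_apply, Matrix.map_apply, Matrix.one_apply, Matrix.smul_apply,
    Matrix.sub_apply, Matrix.diagonal_apply, apply_ite, smul_eq_mul, mul_ite, mul_one, mul_zero]


/-- The finite rank coefficients `C̃_0, …, C̃_{N+p}` are first integrals of the finite
Bogoyavlensky lattice `b_i' = b_i (Σ_{j=1}^p b_{i+j} − Σ_{j=1}^p b_{i−j})`. -/
theorem FRC_Ctilde_first_integrals (p N : ℕ) (hp : 1 ≤ p) (hN : 2 * p - 1 ≤ N)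
    (I : Set ℝ) (hI : I.OrdConnected)
    (b : ℤ → ℝ → ℂ)
    (hbout : ∀ l : ℤ, l < 0 ∨ (N : ℤ) < l → ∀ t : ℝ, b l t = 0)
    (hbne : ∀ i : ℤ, 0 ≤ i → i ≤ (N : ℤ) → ∀ t ∈ I, b i t ≠ 0)
    (hbode : ∀ i : ℤ, 0 ≤ i → i ≤ (N : ℤ) → ∀ t ∈ I, HasDerivWithinAt (b i)
      (b i t * (∑ j ∈ Finset.Icc 1 p, b (i + (j : ℤ)) t -
        ∑ j ∈ Finset.Icc 1 p, b (i - (j : ℤ)) t)) I t)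
    (Ct : ℕ → ℝ → ℂ)
    (hCtdiff : ∀ v, v ≤ N + p → ∀ t ∈ I, DifferentiableWithinAt ℝ (Ct v) I t)
    (hCtrel : ∀ k, N + p + 1 ≤ k → ∀ l, 1 ≤ l → l ≤ p → ∀ t ∈ I,
      momL2N p N (fun n : ℕ => b (n : ℤ) t) k l =
        ∑ v ∈ Finset.range (N + p + 1), Ct v t *
          momL2N p N (fun n : ℕ => b (n : ℤ) t) (k - v - 1) l)
    (hΔ : ∀ t ∈ I, Matrix.det (Matrix.of fun i j : Fin (N + p + 1) =>
        momL2N p N (fun n : ℕ => b (n : ℤ) t) ((i : ℕ) + (j : ℕ) / p) ((j : ℕ) % p + 1)) ≠ 0) :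
    ∀ v, v ≤ N + p → ∀ t ∈ I, ∀ s ∈ I, Ct v t = Ct v s := by
  intro v hv t ht s hs
  set c : ℕ → ℝ → ℂ := fun w u =>
    -((L2N p N (fun m : ℕ => b (m : ℤ) u)).charpoly.coeff (N + p - w)) with hc
  have step1 : ∀ u ∈ I, ∀ w, w ≤ N + p → Ct w u = c w u := by
    intro u hu
    set bb : ℕ → ℂ := fun m => b (m : ℤ) u with hbb
    set α := Matrix.of (fun i j : Fin (N + p + 1) =>
        momL2N p N bb ((i : ℕ) + (j : ℕ) / p) ((j : ℕ) % p + 1)) with hα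
    have hαdet : α.det ≠ 0 := hΔ u hu
    set e : Fin (N + p + 1) → ℂ := fun i =>
      Ct (N + p - (i : ℕ)) u - c (N + p - (i : ℕ)) u with he
    have hrow : ∀ jc : Fin (N + p + 1), Matrix.vecMul e α jc = 0 := by
      intro jc
      have hppos : 0 < p := hp
      have hk : N + p + 1 ≤ N + p + 1 + (jc : ℕ) / p := Nat.le_add_right _ _
      have hmod : (jc : ℕ) % p < p := Nat.mod_lt _ hppos
      have hrel := hCtrel (N + p + 1 + (jc : ℕ) / p) hk ((jc : ℕ) % p + 1)
        (by omega) (by omega) u hu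
      have hch := FRCmomrec p N bb (N + p + 1 + (jc : ℕ) / p) hk ((jc : ℕ) % p + 1)
      have hzero : ∑ w ∈ Finset.range (N + p + 1), (Ct w u - c w u) *
          momL2N p N bb (N + p + 1 + (jc : ℕ) / p - w - 1) ((jc : ℕ) % p + 1) = 0 := by
        have hd : ∀ w ∈ Finset.range (N + p + 1), (Ct w u - c w u) *
            momL2N p N bb (N + p + 1 + (jc : ℕ) / p - w - 1) ((jc : ℕ) % p + 1)
            = Ct w u * momL2N p N bb (N + p + 1 + (jc : ℕ) / p - w - 1) ((jc : ℕ) % p + 1)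
              - (-((L2N p N bb).charpoly.coeff (N + p - w))) *
                momL2N p N bb (N + p + 1 + (jc : ℕ) / p - w - 1) ((jc : ℕ) % p + 1) := by
          intro w _; rw [hc]; ring
        rw [Finset.sum_congr rfl hd, Finset.sum_sub_distrib, ← hrel, ← hch, sub_self]
      have hswap := Finset.sum_range_reflect (fun w => (Ct w u - c w u) *
          momL2N p N bb (N + p + 1 + (jc : ℕ) / p - w - 1) ((jc : ℕ) % p + 1)) (N + p + 1)
      rw [← hswap] at hzero
      have hfin : Matrix.vecMul e α jc = ∑ w ∈ Finset.range (N + p + 1),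
          (Ct (N + p - w) u - c (N + p - w) u) *
            momL2N p N bb (w + (jc : ℕ) / p) ((jc : ℕ) % p + 1) := by
        rw [Matrix.vecMul, dotProduct]
        rw [← Fin.sum_univ_eq_sum_range (fun w =>
          (Ct (N + p - w) u - c (N + p - w) u) *
            momL2N p N bb (w + (jc : ℕ) / p) ((jc : ℕ) % p + 1)) (N + p + 1)]
        exact Finset.sum_congr rfl fun i _ => rfl
      rw [hfin]
      rw [← hzero]
      refine Finset.sum_congr rfl fun w hw => ?_
      simp only [Finset.mem_range] at hw
      have h1 : N + p + 1 - 1 - w = N + p - w := by omega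
      have h2 : N + p + 1 + (jc : ℕ) / p - (N + p - w) - 1 = w + (jc : ℕ) / p := by omega
      rw [h1, h2]
    have h1 : Matrix.vecMul e α = 0 := funext hrow
    have h2 : e = 0 := by
      have h3 := congrArg (fun w => Matrix.vecMul w α⁻¹) h1
      simpa [Matrix.vecMul_vecMul, Matrix.mul_nonsing_inv α (Ne.isUnit hαdet), Matrix.vecMul_one] using h3
    intro w hw
    have h4 := congrFun h2 ⟨N + p - w, by omega⟩
    simp only [he, Pi.zero_apply] at h4
    have h5 : N + p - (N + p - w) = w := by omega
    rw [h5] at h4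
    exact sub_eq_zero.mp h4
  rw [step1 t ht v hv, step1 s hs v hv]
  have hchar : (L2N p N (fun m : ℕ => b (m : ℤ) t)).charpoly
      = (L2N p N (fun m : ℕ => b (m : ℤ) s)).charpoly :=
    Polynomial.funext fun x => by
      rw [FRCcharpoly_eval, FRCcharpoly_eval]
      exact FRCdet_const p N hp hI b hbout hbode x ht hs
  rw [hc]
  simp only [hchar]
end
end

section
/- Let p ≥ 1 and N ≥ 2p−1. (1) Let a_0,…,a_N be nonzero complex numbers, L1_N the associated matrix with moments S_k^m, and write det(λI − L1_N) = λ^{N+2} + c_0 λ^{N+1} + ⋯ + c_{N+1}. If C_0,…,C_{N+1} ∈ ℂ satisfy S_k^l = Σ_{v=0}^{N+1} C_v S_{k−v−1}^l for all k ≥ N+2 and 1 ≤ l ≤ p, and Δ_{N+1} ≠ 0 where Δ_{N+1} = det(S_{⌊i/p⌋+j}^{(i mod p)+1})_{i,j=0}^{N+1}, then C_v = −c_v for v = 0,…,N+1. (2) Let b_0,…,b_N be nonzero complex numbers, L2_N the associated matrix with moments S̃_k^n, and write det(λI − L2_N) = λ^{N+p+1} + c̃_0 λ^{N+p} + ⋯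 + c̃_{N+p}. If C̃_0,…,C̃_{N+p} ∈ ℂ satisfy S̃_k^l = Σ_{v=0}^{N+p} C̃_v S̃_{k−v−1}^l for all k ≥ N+p+1 and 1 ≤ l ≤ p, and Δ̃_{N+p} = det(S̃_{i+⌊j/p⌋}^{(j mod p)+1})_{i,j=0}^{N+p} ≠ 0, then C̃_v = −c̃_v for v = 0,…,N+p. -/
open scoped BigOperators

noncomputable section

open Polynomial in
lemma aux_pow {n : Type*} [Fintype n] [DecidableEq n] (M : Matrix n n ℂ) (c : ℕ → ℂ) (d : ℕ)
    (h : M.charpoly = X ^ (d + 1) + ∑ v ∈ Finset.range (d + 1), Polynomial.C (c v) * X ^ (d - v))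
    (k : ℕ) (hk : d + 1 ≤ k) :
    M ^ k = ∑ v ∈ Finset.range (d + 1), (-c v) • M ^ (k - v - 1) := by
  have hCH := Matrix.aeval_self_charpoly M
  rw [h] at hCH
  simp only [map_add, map_sum, map_mul, map_pow, Polynomial.aeval_X, Polynomial.aeval_C] at hCH
  have key : M ^ (d + 1) = ∑ v ∈ Finset.range (d + 1), (-c v) • M ^ (d - v) := by
    rw [eq_neg_of_add_eq_zero_left hCH, ← Finset.sum_neg_distrib]
    exact Finset.sum_congr rfl fun v _ => by simp [Algebra.smul_def]
  calc M ^ k = M ^ (k - (d + 1)) * M ^ (d + 1) := by rw [← pow_add]; congr 1; omega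
    _ = ∑ v ∈ Finset.range (d + 1), (-c v) • (M ^ (k - (d + 1)) * M ^ (d - v)) := by
        rw [key, Finset.mul_sum]; simp [mul_smul_comm]
    _ = ∑ v ∈ Finset.range (d + 1), (-c v) • M ^ (k - v - 1) := by
        refine Finset.sum_congr rfl fun v hv => ?_
        rw [← pow_add]
        have := Finset.mem_range.mp hv
        congr 2
        omega

/-- The finite rank coefficients `C` and `C̃` coincide, up to sign, with the coefficients
of the characteristic polynomials of `L1_N` and `L2_N` respectively. -/
theorem FRC_eq_charpoly_coeffs (p N : ℕ) (hp : 1 ≤ p) (hN : 2 * p - 1 ≤ N)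
    (a b : ℕ → ℂ) (ha : ∀ i ≤ N, a i ≠ 0) (hb : ∀ i ≤ N, b i ≠ 0)
    (c : ℕ → ℂ)
    (hc : (L1N p N a).charpoly = Polynomial.X ^ (N + 2) +
      ∑ v ∈ Finset.range (N + 2), Polynomial.C (c v) * Polynomial.X ^ (N + 1 - v))
    (ct : ℕ → ℂ)
    (hct : (L2N p N b).charpoly = Polynomial.X ^ (N + p + 1) +
      ∑ v ∈ Finset.range (N + p + 1), Polynomial.C (ct v) * Polynomial.X ^ (N + p - v))
    (C : ℕ → ℂ)
    (hC : ∀ k, N + 2 ≤ k → ∀ l, 1 ≤ l → l ≤ p →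
      momL1N p N a k l = ∑ v ∈ Finset.range (N + 2), C v * momL1N p N a (k - v - 1) l)
    (hΔ : Matrix.det (Matrix.of fun i j : Fin (N + 2) =>
      momL1N p N a ((i : ℕ) / p + (j : ℕ)) ((i : ℕ) % p + 1)) ≠ 0)
    (Ct : ℕ → ℂ)
    (hCt : ∀ k, N + p + 1 ≤ k → ∀ l, 1 ≤ l → l ≤ p →
      momL2N p N b k l = ∑ v ∈ Finset.range (N + p + 1), Ct v * momL2N p N b (k - v - 1) l)
    (hΔt : Matrix.det (Matrix.of fun i j : Fin (N + p + 1) =>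
      momL2N p N b ((i : ℕ) + (j : ℕ) / p) ((j : ℕ) % p + 1)) ≠ 0) :
    (∀ v, v ≤ N + 1 → C v = -c v) ∧ (∀ v, v ≤ N + p → Ct v = -ct v) := by
  -- moment recurrences from Cayley–Hamilton
  have hmom1 : ∀ k, N + 2 ≤ k → ∀ l,
      momL1N p N a k l = ∑ v ∈ Finset.range (N + 2), (-c v) * momL1N p N a (k - v - 1) l := by
    intro k hk l
    have h := aux_pow (L1N p N a) c (N + 1) hc k hk
    unfold momL1N
    rw [h]
    simp [Finset.sum_apply, Matrix.sum_apply]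
  have hmom2 : ∀ k, N + p + 1 ≤ k → ∀ l,
      momL2N p N b k l = ∑ v ∈ Finset.range (N + p + 1), (-ct v) * momL2N p N b (k - v - 1) l := by
    intro k hk l
    have h := aux_pow (L2N p N b) ct (N + p) hct k hk
    unfold momL2N
    rw [h]
    simp [Finset.sum_apply, Matrix.sum_apply]
  -- difference relations
  have hrel1 : ∀ k, N + 2 ≤ k → ∀ l, 1 ≤ l → l ≤ p →
      ∑ v ∈ Finset.range (N + 2), (C v + c v) * momL1N p N a (k - v - 1) l = 0 := by
    intro k hk l hl hlp
    have h1 := hC k hk l hl hlp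
    have h2 := hmom1 k hk l
    have h3 : ∑ v ∈ Finset.range (N + 2), (C v + c v) * momL1N p N a (k - v - 1) l
        = (∑ v ∈ Finset.range (N + 2), C v * momL1N p N a (k - v - 1) l)
          + ∑ v ∈ Finset.range (N + 2), c v * momL1N p N a (k - v - 1) l := by
      rw [← Finset.sum_add_distrib]
      exact Finset.sum_congr rfl fun v _ => by ring
    rw [h3, ← h1, h2, ← Finset.sum_add_distrib]
    exact Finset.sum_eq_zero fun v _ => by ring
  have hrel2 : ∀ k, N + p + 1 ≤ k → ∀ l, 1 ≤ l → l ≤ p →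
      ∑ v ∈ Finset.range (N + p + 1), (Ct v + ct v) * momL2N p N b (k - v - 1) l = 0 := by
    intro k hk l hl hlp
    have h1 := hCt k hk l hl hlp
    have h2 := hmom2 k hk l
    have h3 : ∑ v ∈ Finset.range (N + p + 1), (Ct v + ct v) * momL2N p N b (k - v - 1) l
        = (∑ v ∈ Finset.range (N + p + 1), Ct v * momL2N p N b (k - v - 1) l)
          + ∑ v ∈ Finset.range (N + p + 1), ct v * momL2N p N b (k - v - 1) l := by
      rw [← Finset.sum_add_distrib]
      exact Finset.sum_congr rfl fun v _ => by ring
    rw [h3, ← h1, h2, ← Finset.sum_add_distrib]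
    exact Finset.sum_eq_zero fun v _ => by ring
  constructor
  · -- part 1
    set x : Fin (N + 2) → ℂ := fun j => C (N + 1 - (j : ℕ)) + c (N + 1 - (j : ℕ)) with hxdef
    have hmv : (Matrix.of fun i j : Fin (N + 2) =>
        momL1N p N a ((i : ℕ) / p + (j : ℕ)) ((i : ℕ) % p + 1)).mulVec x = 0 := by
      funext i
      have hlp : (i : ℕ) % p + 1 ≤ p := by
        have := Nat.mod_lt (i : ℕ) (show 0 < p by omega); omega
      have hr := hrel1 ((i : ℕ) / p + N + 2) (by generalize (i : ℕ) / p = q; omega) ((i : ℕ) % p + 1) (by omega) hlp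
      have hr' : ∑ v ∈ Finset.range (N + 2),
          (C v + c v) * momL1N p N a ((i : ℕ) / p + N + 1 - v) ((i : ℕ) % p + 1) = 0 := by
        rw [← hr]
        refine Finset.sum_congr rfl fun v _ => ?_
        have h3 : (i : ℕ) / p + N + 2 - v - 1 = (i : ℕ) / p + N + 1 - v := by generalize (i : ℕ) / p = q; omega
        rw [h3]
      rw [← Finset.sum_range_reflect] at hr'
      show (Matrix.of fun i j : Fin (N + 2) =>
        momL1N p N a ((i : ℕ) / p + (j : ℕ)) ((i : ℕ) % p + 1)).mulVec x i = 0
      simp only [Matrix.mulVec, dotProduct, Matrix.of_apply, hxdef]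
      rw [Fin.sum_univ_eq_sum_range (fun jn =>
        momL1N p N a ((i : ℕ) / p + jn) ((i : ℕ) % p + 1) * (C (N + 1 - jn) + c (N + 1 - jn)))]
      rw [← hr']
      refine Finset.sum_congr rfl fun j hj => ?_
      have hj' : j < N + 2 := Finset.mem_range.mp hj
      have e1 : N + 2 - 1 - j = N + 1 - j := by omega
      have e2 : (i : ℕ) / p + N + 1 - (N + 1 - j) = (i : ℕ) / p + j := by generalize (i : ℕ) / p = q; omega
      rw [e1, e2]
      ring
    have hx0 := Matrix.eq_zero_of_mulVec_eq_zero hΔ hmv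
    intro v hv
    have := congrFun hx0 ⟨N + 1 - v, by omega⟩
    simp only [hxdef, Pi.zero_apply] at this
    have e : N + 1 - ((⟨N + 1 - v, by omega⟩ : Fin (N + 2)) : ℕ) = v := by simp; omega
    rw [e] at this
    linear_combination this
  · -- part 2
    set y : Fin (N + p + 1) → ℂ := fun i => Ct (N + p - (i : ℕ)) + ct (N + p - (i : ℕ)) with hydef
    have hmv : Matrix.vecMul y (Matrix.of fun i j : Fin (N + p + 1) =>
        momL2N p N b ((i : ℕ) + (j : ℕ) / p) ((j : ℕ) % p + 1)) = 0 := by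
      funext j
      have hlp : (j : ℕ) % p + 1 ≤ p := by
        have := Nat.mod_lt (j : ℕ) (show 0 < p by omega); omega
      have hr := hrel2 (N + p + 1 + (j : ℕ) / p) (by generalize (j : ℕ) / p = q; omega) ((j : ℕ) % p + 1) (by omega) hlp
      have hr' : ∑ v ∈ Finset.range (N + p + 1),
          (Ct v + ct v) * momL2N p N b (N + p - v + (j : ℕ) / p) ((j : ℕ) % p + 1) = 0 := by
        rw [← hr]
        refine Finset.sum_congr rfl fun v hv => ?_
        have hv' : v < N + p + 1 := Finset.mem_range.mp hv
        have h3 : N + p + 1 + (j : ℕ) / p - v - 1 = N + p - v + (j : ℕ) / p := by generalize (j : ℕ) / p = q; omega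
        rw [h3]
      rw [← Finset.sum_range_reflect] at hr'
      show Matrix.vecMul y (Matrix.of fun i j : Fin (N + p + 1) =>
        momL2N p N b ((i : ℕ) + (j : ℕ) / p) ((j : ℕ) % p + 1)) j = 0
      simp only [Matrix.vecMul, dotProduct, Matrix.of_apply, hydef]
      rw [Fin.sum_univ_eq_sum_range (fun iN =>
        (Ct (N + p - iN) + ct (N + p - iN)) * momL2N p N b (iN + (j : ℕ) / p) ((j : ℕ) % p + 1))]
      rw [← hr']
      refine Finset.sum_congr rfl fun i hi => ?_
      have hi' : i < N + p + 1 := Finset.mem_range.mp hi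
      have e1 : N + p + 1 - 1 - i = N + p - i := by omega
      have e2 : N + p - (N + p - i) = i := by omega
      rw [e1, e2]
    have hy0 := Matrix.eq_zero_of_vecMul_eq_zero hΔt hmv
    intro v hv
    have := congrFun hy0 ⟨N + p - v, by omega⟩
    simp only [hydef, Pi.zero_apply] at this
    have e : N + p - ((⟨N + p - v, by omega⟩ : Fin (N + p + 1)) : ℕ) = v := by simp; omega
    rw [e] at this
    linear_combination this
end
end
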